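/- arXiv:0811.2766 — 4 statements merged into one kernel-verified Lean document; each statement's English description precedes it below -/
import Mathlib

section
/- Let F be an algebraically closed field, G a finite group, and V a finite-dimensional simple F[G]-module. Let P ≤ G be a subgroup such that: (i) dim_F End_{F[P]}(Res^G_P V) ≥ 2, and (ii) the induced module W := Ind_P^G(1_P) satisfies condition (★). Then for every subgroup H ≤ G, either G = HP (every element of G is a product h·p with h ∈ H, p ∈ P) or the restriction Res^G_H V is not a simple F[H]-module. -/
open Module Pointwise

variable {F : Type} [Field F]

section Defs

variable {G : Type} [Group G] {V : Type} [AddCommGroup V] [Module F V]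

def IsSubrep (ρ : Representation F G V) (p : Submodule F V) : Prop :=
  ∀ (g : G) (v : V), v ∈ p → ρ g v ∈ p

def IsIrredRep (ρ : Representation F G V) : Prop :=
  (⊥ : Submodule F V) ≠ ⊤ ∧ ∀ p : Submodule F V, IsSubrep ρ p → p = ⊥ ∨ p = ⊤

def repCommutant (ρ : Representation F G V) : Submodule F (V →ₗ[F] V) where
  carrier := {f | ∀ g : G, f ∘ₗ ρ g = ρ g ∘ₗ f}
  add_mem' := by
    intro a b ha hb g
    rw [LinearMap.add_comp, LinearMap.comp_add, ha g, hb g]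
  zero_mem' := by
    intro g
    rw [LinearMap.zero_comp, LinearMap.comp_zero]
  smul_mem' := by
    intro c f hf g
    rw [LinearMap.smul_comp, LinearMap.comp_smul, hf g]

def TrivialOn (ρ : Representation F G V) (p : Submodule F V) : Prop :=
  ∀ (g : G) (v : V), v ∈ p → ρ g v = v

def StarCond (ρ : Representation F G V) : Prop :=
  (∃ T A : Submodule F V, IsSubrep ρ T ∧ IsSubrep ρ A ∧ IsCompl T A ∧
      finrank F T = 1 ∧ TrivialOn ρ T ∧
      A ≠ ⊥ ∧ (∀ p : Submodule F V, p ≤ A → IsSubrep ρ p → p = ⊥ ∨ p = A) ∧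
      ¬ TrivialOn ρ A) ∨
  (∃ W₁ W₂ : Submodule F V, IsSubrep ρ W₁ ∧ IsSubrep ρ W₂ ∧
      ⊥ < W₁ ∧ W₁ < W₂ ∧ W₂ < ⊤ ∧
      (∀ p : Submodule F V, IsSubrep ρ p → p = ⊥ ∨ p = W₁ ∨ p = W₂ ∨ p = ⊤) ∧
      finrank F W₁ = 1 ∧ TrivialOn ρ W₁ ∧
      finrank F (V ⧸ W₂) = 1 ∧ (∀ (g : G) (v : V), ρ g v - v ∈ W₂) ∧
      ¬ (∀ (g : G) (v : V), v ∈ W₂ → ρ g v - v ∈ W₁))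

end Defs

section Aux

variable {G : Type} [Group G] {V : Type} [AddCommGroup V] [Module F V]

lemma IsIrredRep.nontrivial' {ρ : Representation F G V} (h : IsIrredRep ρ) : Nontrivial V := by
  by_contra hn
  have : Subsingleton V := not_nontrivial_iff_subsingleton.mp hn
  exact h.1 (Subsingleton.elim _ _)

lemma schur [IsAlgClosed F] [FiniteDimensional F V] {ρ : Representation F G V}
    (h : IsIrredRep ρ) {f : V →ₗ[F] V} (hf : ∀ g : G, f * ρ g = ρ g * f) :
    ∃ c : F, f = c • LinearMap.id := by
  have := h.nontrivial'
  obtain ⟨c, hc⟩ := Module.End.exists_eigenvalue (f : Module.End F V)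
  obtain ⟨v, hv⟩ := hc.exists_hasEigenvector
  refine ⟨c, ?_⟩
  set p := LinearMap.ker (f - c • (LinearMap.id : V →ₗ[F] V)) with hp
  have hsub : IsSubrep ρ p := by
    intro g w hw
    simp only [hp, LinearMap.mem_ker, LinearMap.sub_apply, LinearMap.smul_apply,
      LinearMap.id_apply] at hw ⊢
    have h1 : f (ρ g w) = ρ g (f w) := by
      have := congrArg (fun m => m w) (hf g)
      simpa [Module.End.mul_apply] using this
    rw [h1, ← map_smul, ← map_sub, hw, map_zero]
  have hvp : v ∈ p := by
    simp only [hp, LinearMap.mem_ker, LinearMap.sub_apply, LinearMap.smul_apply,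
      LinearMap.id_apply]
    rw [hv.apply_eq_smul, sub_self]
  rcases h.2 p hsub with hb | ht
  · exact absurd (hb ▸ hvp) (by simpa using hv.right)
  · exact sub_eq_zero.mp (LinearMap.ker_eq_top.mp ht)

lemma conj_fix_comm {M : Type} [Monoid M] {ρ : G →* M} {g : G} {f : M}
    (hgf : ρ g * f * ρ g⁻¹ = f) : f * ρ g = ρ g * f := by
  have h1 : ρ g⁻¹ * ρ g = 1 := by rw [← map_mul, inv_mul_cancel, map_one]
  calc f * ρ g = ρ g * f * ρ g⁻¹ * ρ g := by rw [hgf]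
    _ = ρ g * f * (ρ g⁻¹ * ρ g) := by rw [mul_assoc]
    _ = ρ g * f := by rw [h1, mul_one]

lemma two_in_line {M : Type} [AddCommGroup M] [Module F M] [FiniteDimensional F M]
    {p : Submodule F M} (hp : finrank F p ≤ 1) {u₁ u₂ : M} (h1 : u₁ ∈ p) (h2 : u₂ ∈ p)
    (hne : u₂ ≠ 0) (hnem : u₁ ∉ Submodule.span F {u₂}) : False := by
  have hsp : Submodule.span F {u₂} ≤ p := (Submodule.span_singleton_le_iff_mem _ _).mpr h2
  have hfr : finrank F (Submodule.span F {u₂}) = 1 := finrank_span_singleton hne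
  have : Submodule.span F {u₂} = p :=
    Submodule.eq_of_le_of_finrank_le hsp (by rw [hfr]; exact hp)
  exact hnem (this ▸ h1)

end Aux

set_option maxHeartbeats 1000000

theorem statement_0
    [IsAlgClosed F]
    {G : Type} [Group G] [Finite G]
    {V : Type} [AddCommGroup V] [Module F V] [FiniteDimensional F V]
    (ρ : Representation F G V) (hV : IsIrredRep ρ)
    (P : Subgroup G)
    (hEnd : 2 ≤ finrank F (repCommutant (ρ.comp P.subtype)))
    (hStar : StarCond (Representation.ofMulAction F G (G ⧸ P)))
    (H : Subgroup G) :
    (∀ g : G, ∃ h ∈ H, ∃ p ∈ P, g = h * p) ∨ ¬ IsIrredRep (ρ.comp H.subtype) := by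
  classical
  by_cases hHP : ∀ g : G, ∃ h ∈ H, ∃ p ∈ P, g = h * p
  · exact Or.inl hHP
  right
  intro hIrrH
  push_neg at hHP
  obtain ⟨g₀, hg₀⟩ := hHP
  letI : Fintype (G ⧸ P) := Fintype.ofFinite _
  haveI hFD : FiniteDimensional F (MonoidAlgebra F (G ⧸ P)) := inferInstance
  have hVnt : Nontrivial V := hV.nontrivial'
  obtain ⟨v₀, hv₀⟩ := exists_ne (0 : V)
  have hidne : (LinearMap.id : V →ₗ[F] V) ≠ 0 := by
    intro h0
    exact hv₀ (by simpa using congrArg (fun m => m v₀) h0)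
  -- obtain a non-scalar θ commuting with ρ(P)
  obtain ⟨θ, hθP, hθns⟩ : ∃ θ ∈ repCommutant (ρ.comp P.subtype),
      θ ∉ Submodule.span F {(LinearMap.id : V →ₗ[F] V)} := by
    by_contra hcon
    push_neg at hcon
    have hle : repCommutant (ρ.comp P.subtype) ≤
        Submodule.span F {(LinearMap.id : V →ₗ[F] V)} := hcon
    have h1 : finrank F (repCommutant (ρ.comp P.subtype)) ≤
        finrank F (Submodule.span F {(LinearMap.id : V →ₗ[F] V)}) :=
      Submodule.finrank_mono hle
    rw [finrank_span_singleton hidne] at h1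
    omega
  have hθ0 : θ ≠ 0 := fun h0 => hθns (h0 ▸ Submodule.zero_mem _)
  have hcomP : ∀ p ∈ P, θ * ρ p = ρ p * θ := fun p hp => hθP ⟨p, hp⟩
  -- the conjugation function on cosets
  have hconjP : ∀ (a p : G), p ∈ P → ρ (a * p) * θ * ρ (a * p)⁻¹ = ρ a * θ * ρ a⁻¹ := by
    intro a p hp
    have h2 : ρ p * θ * ρ p⁻¹ = θ := by
      rw [← hcomP p hp, mul_assoc, ← map_mul, mul_inv_cancel, map_one, mul_one]
    have h3 : ρ (a * p) * θ * ρ (a * p)⁻¹ = ρ a * (ρ p * θ * ρ p⁻¹) * ρ a⁻¹ := by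
      rw [mul_inv_rev, map_mul, map_mul]
      simp only [mul_assoc]
    rw [h3, h2]
  set σ : G ⧸ P → (V →ₗ[F] V) := fun x =>
    Quotient.liftOn' x (fun g => ρ g * θ * ρ g⁻¹) (by
      intro a b hab
      have hp : a⁻¹ * b ∈ P := QuotientGroup.leftRel_apply.mp hab
      have hb : b = a * (a⁻¹ * b) := by group
      rw [hb, hconjP a _ hp]) with hσ
  have hσmk : ∀ a : G, σ (QuotientGroup.mk a) = ρ a * θ * ρ a⁻¹ := fun a => rfl
  set W := Representation.ofMulAction F G (G ⧸ P) with hW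
  set φ : (MonoidAlgebra F (G ⧸ P)) →ₗ[F] (V →ₗ[F] V) := Finsupp.linearCombination F σ ∘ₗ (MonoidAlgebra.coeffLinearEquiv F).toLinearMap with hφ
  have hφsingle : ∀ (a : G ⧸ P) (b : F), φ (MonoidAlgebra.single a b) = b • σ a := by
    intro a b
    show Finsupp.linearCombination F σ (Finsupp.single a b) = _
    exact Finsupp.linearCombination_single F b a
  have hσsmul : ∀ (g : G) (x : G ⧸ P), σ (g • x) = ρ g * σ x * ρ g⁻¹ := by
    intro g x
    induction x using QuotientGroup.induction_on with
    | H a =>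
      rw [MulAction.Quotient.smul_mk, hσmk, hσmk]
      rw [smul_eq_mul, mul_inv_rev, map_mul, map_mul]
      simp only [mul_assoc]
  have hequiv : ∀ (g : G) (w : MonoidAlgebra F (G ⧸ P)), φ (W g w) = ρ g * φ w * ρ g⁻¹ := by
    intro g w
    induction w using MonoidAlgebra.induction_linear with
    | zero => simp
    | add f₁ f₂ ih1 ih2 => simp only [map_add, ih1, ih2, mul_add, add_mul]
    | single a b =>
      rw [hW, Representation.ofMulAction_single, hφsingle,
        hφsingle, hσsmul]
      rw [mul_smul_comm, smul_mul_assoc]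
  set K := LinearMap.ker φ with hK
  have hKsub : IsSubrep W K := by
    intro g w hw
    rw [hK, LinearMap.mem_ker] at hw ⊢
    rw [hequiv, hw, mul_zero, zero_mul]
  have hθφ : φ (MonoidAlgebra.single (QuotientGroup.mk (1 : G)) (1 : F)) = θ := by
    rw [hφsingle, hσmk]
    simp
  -- if W g w - w ∈ K for all g w, then θ is scalar : contradiction
  have hbigK : (∀ (g : G) (w : MonoidAlgebra F (G ⧸ P)), W g w - w ∈ K) → False := by
    intro hb
    have hcomm : ∀ g : G, θ * ρ g = ρ g * θ := by
      intro g
      apply conj_fix_comm (ρ := ρ)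
      have h1 : φ (W g (MonoidAlgebra.single (QuotientGroup.mk (1 : G)) (1 : F))) -
          φ (MonoidAlgebra.single (QuotientGroup.mk (1 : G)) (1 : F)) = 0 := by
        rw [← map_sub]
        exact (LinearMap.mem_ker).mp (hb g _)
      rw [hequiv, hθφ] at h1
      exact sub_eq_zero.mp h1
    obtain ⟨c, hc⟩ := schur hV hcomm
    exact hθns (hc ▸ Submodule.smul_mem _ c (Submodule.mem_span_singleton_self _))
  -- H-orbit sums
  set o : G ⧸ P → Finset (G ⧸ P) := fun x =>
    Finset.univ.filter (fun y => ∃ h ∈ H, h • x = y) with ho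
  set u : G ⧸ P → (MonoidAlgebra F (G ⧸ P)) := fun x => ∑ y ∈ o x, MonoidAlgebra.single y (1 : F) with hu
  have hmemo : ∀ x y : G ⧸ P, y ∈ o x ↔ ∃ h ∈ H, h • x = y := by
    intro x y
    rw [ho]
    simp
  have huval : ∀ x z : G ⧸ P, (u x).coeff z = if z ∈ o x then (1 : F) else 0 := by
    intro x z
    rw [hu]
    rw [MonoidAlgebra.coeff_sum, Finsupp.finset_sum_apply]
    rw [← Finset.sum_ite_eq' (o x) z (fun _ => (1 : F))]
    apply Finset.sum_congr rfl
    intro y _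
    rw [MonoidAlgebra.coeff_single, Finsupp.single_apply]
  have hinv : ∀ (x : G ⧸ P) (h : G), h ∈ H → W h (u x) = u x := by
    intro x h hh
    rw [hu, map_sum]
    have h1 : ∀ y ∈ o x, W h (MonoidAlgebra.single y (1 : F)) = MonoidAlgebra.single (h • y) (1 : F) := by
      intro y _
      rw [hW]
      exact Representation.ofMulAction_single h y 1
    rw [Finset.sum_congr rfl h1]
    have himg : (o x).image (fun y => h • y) = o x := by
      apply Finset.ext
      intro z
      rw [Finset.mem_image]
      constructor
      · rintro ⟨y, hy, rfl⟩
        obtain ⟨h', hh', rfl⟩ := (hmemo x y).mp hy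
        exact (hmemo x _).mpr ⟨h * h', H.mul_mem hh hh', mul_smul h h' x⟩
      · intro hz
        refine ⟨h⁻¹ • z, ?_, smul_inv_smul h z⟩
        obtain ⟨h', hh', rfl⟩ := (hmemo x z).mp hz
        exact (hmemo x _).mpr ⟨h⁻¹ * h', H.mul_mem (H.inv_mem hh) hh', mul_smul _ _ x⟩
    calc ∑ y ∈ o x, MonoidAlgebra.single (h • y) (1 : F)
        = ∑ z ∈ (o x).image (fun y => h • y), MonoidAlgebra.single z (1 : F) := by
          rw [Finset.sum_image (fun a _ b _ hab => MulAction.injective h hab)]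
      _ = ∑ y ∈ o x, MonoidAlgebra.single y (1 : F) := by rw [himg]
  -- the two vectors
  set u₁ := u (QuotientGroup.mk (1 : G)) with hu₁
  set u₂ := u (QuotientGroup.mk g₀) with hu₂
  have hm11 : (QuotientGroup.mk (1 : G) : G ⧸ P) ∈ o (QuotientGroup.mk (1 : G)) :=
    (hmemo _ _).mpr ⟨1, H.one_mem, one_smul _ _⟩
  have hm22 : (QuotientGroup.mk g₀ : G ⧸ P) ∈ o (QuotientGroup.mk g₀) :=
    (hmemo _ _).mpr ⟨1, H.one_mem, one_smul _ _⟩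
  have hm12 : (QuotientGroup.mk (1 : G) : G ⧸ P) ∉ o (QuotientGroup.mk g₀) := by
    intro hmem
    obtain ⟨h, hh, heq⟩ := (hmemo _ _).mp hmem
    rw [MulAction.Quotient.smul_mk] at heq
    have : (h * g₀)⁻¹ * 1 ∈ P := QuotientGroup.eq.mp heq
    rw [mul_one] at this
    have hP : h * g₀ ∈ P := by
      have := P.inv_mem this
      rwa [inv_inv] at this
    exact hg₀ h⁻¹ (H.inv_mem hh) (h * g₀) hP (by group)
  have hval11 : u₁.coeff (QuotientGroup.mk (1 : G)) = 1 := by rw [hu₁, huval, if_pos hm11]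
  have hval21 : u₂.coeff (QuotientGroup.mk (1 : G)) = 0 := by rw [hu₂, huval, if_neg hm12]
  have hval22 : u₂.coeff (QuotientGroup.mk g₀) = 1 := by rw [hu₂, huval, if_pos hm22]
  have hu₂ne : u₂ ≠ 0 := by
    intro h0
    rw [h0] at hval22
    simp at hval22
  have hu₁ne : u₁ ≠ 0 := by
    intro h0
    rw [h0] at hval11
    simp at hval11
  have hnem : u₁ ∉ Submodule.span F {u₂} := by
    intro hmem
    obtain ⟨c, hc⟩ := Submodule.mem_span_singleton.mp hmem
    have := congrArg (fun w : MonoidAlgebra F (G ⧸ P) => w.coeff (QuotientGroup.mk (1 : G))) hc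
    simp only [MonoidAlgebra.coeff_smul_apply, hval21, hval11, smul_zero] at this
    exact one_ne_zero this.symm
  -- φ of the orbit sums is scalar
  have hφscal : ∀ x : G ⧸ P, (∀ h ∈ H, W h (u x) = u x) → ∃ c : F, φ (u x) = c • LinearMap.id := by
    intro x hx
    apply schur hIrrH
    intro s
    have h1 : (ρ.comp H.subtype) s = ρ (s : G) := rfl
    rw [h1]
    apply conj_fix_comm (ρ := ρ)
    rw [← hequiv, hx s s.2]
  obtain ⟨c₁, hc₁⟩ := hφscal _ (fun h hh => hinv _ h hh)
  obtain ⟨c₂, hc₂⟩ := hφscal _ (fun h hh => hinv _ h hh)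
  -- each W g u_i - u_i lies in K
  have hmove : ∀ (g : G) (x : G ⧸ P) (c : F), φ (u x) = c • LinearMap.id →
      W g (u x) - u x ∈ K := by
    intro g x c hcx
    rw [hK, LinearMap.mem_ker, map_sub, hequiv, hcx]
    rw [← Module.End.one_eq_id, mul_smul_comm, mul_one, smul_mul_assoc, ← map_mul,
      mul_inv_cancel, map_one, sub_self]
  have hmove1 : ∀ g : G, W g u₁ - u₁ ∈ K := fun g => hmove g _ c₁ hc₁
  have hmove2 : ∀ g : G, W g u₂ - u₂ ∈ K := fun g => hmove g _ c₂ hc₂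
  rcases hStar with ⟨T, A, hTsub, hAsub, hcompl, hfrT, htrivT, hAne, hAsimple, hAnontriv⟩ |
    ⟨W₁, W₂, h1sub, h2sub, hbot1, h12, h2top, hclass, hfr1, htriv1, hfrq, hmod, hnot⟩
  · -- Case (a) : W = T ⊕ A
    have hWA : ∀ (g : G) (w : MonoidAlgebra F (G ⧸ P)), W g w - w ∈ A := by
      intro g w
      obtain ⟨t, a, ht, ha, rfl⟩ := Submodule.codisjoint_iff_exists_add_eq.mp hcompl.codisjoint w
      rw [map_add, htrivT g t ht]
      have h2 : t + W g a - (t + a) = W g a - a := by abel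
      rw [h2]
      exact A.sub_mem (hAsub g a ha) ha
    have hKA : K ⊓ A = ⊥ ∨ K ⊓ A = A :=
      hAsimple (K ⊓ A) inf_le_right
        (fun g v hv => ⟨hKsub g v hv.1, hAsub g v hv.2⟩)
    rcases hKA with hKA0 | hKAA
    · -- K ⊓ A = ⊥ : u₁, u₂ are G-fixed
      let Wfix : Submodule F (MonoidAlgebra F (G ⧸ P)) :=
        { carrier := {w | ∀ g : G, W g w = w}
          add_mem' := fun ha hb g => by rw [map_add, ha g, hb g]
          zero_mem' := fun g => map_zero _
          smul_mem' := fun c w hw g => by rw [map_smul, hw g] }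
      have hmemWfix : ∀ w : MonoidAlgebra F (G ⧸ P), w ∈ Wfix ↔ ∀ g : G, W g w = w := fun w => Iff.rfl
      have hfix : ∀ uu : MonoidAlgebra F (G ⧸ P), (∀ g : G, W g uu - uu ∈ K) → uu ∈ Wfix := by
        intro uu hmv
        rw [hmemWfix]
        intro g
        have hm : W g uu - uu ∈ K ⊓ A := Submodule.mem_inf.mpr ⟨hmv g, hWA g uu⟩
        rw [hKA0, Submodule.mem_bot] at hm
        exact sub_eq_zero.mp hm
      have hWfixA : Wfix ⊓ A = ⊥ ∨ Wfix ⊓ A = A :=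
        hAsimple (Wfix ⊓ A) inf_le_right
          (fun g v hv => ⟨fun g' => by rw [hv.1 g]; exact hv.1 g', hAsub g v hv.2⟩)
      rcases hWfixA with heq0 | heqA
      · have hd := Submodule.finrank_sup_add_finrank_inf_eq Wfix A
        rw [heq0, finrank_bot, add_zero] at hd
        have hle1 : finrank F ↥(Wfix ⊔ A) ≤ finrank F (MonoidAlgebra F (G ⧸ P)) := Submodule.finrank_le _
        have htot : finrank F T + finrank F A = finrank F (MonoidAlgebra F (G ⧸ P)) :=
          Submodule.finrank_add_eq_of_isCompl hcompl
        have hWfr : finrank F Wfix ≤ 1 := by omega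
        exact two_in_line hWfr (hfix u₁ hmove1) (hfix u₂ hmove2) hu₂ne hnem
      · exfalso
        apply hAnontriv
        intro g v hv
        have hvm : v ∈ Wfix ⊓ A := by rw [heqA]; exact hv
        exact hvm.1 g
    · -- A ≤ K : θ would be scalar
      have hAK : A ≤ K := by
        rw [← hKAA]
        exact inf_le_left
      exact hbigK (fun g w => hAK (hWA g w))
  · -- Case (b) : uniserial
    have hKle : K ≤ W₁ := by
      rcases hclass K hKsub with h | h | h | h
      · rw [h]; exact bot_le
      · exact le_of_eq h
      · exact absurd (fun g w => h ▸ hmod g w) (fun hb => hbigK hb)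
      · exfalso
        apply hθ0
        rw [← hθφ]
        have : MonoidAlgebra.single (QuotientGroup.mk (1 : G)) (1 : F) ∈ K := h ▸ Submodule.mem_top
        exact LinearMap.mem_ker.mp this
    have hUi : ∀ uu : MonoidAlgebra F (G ⧸ P), uu ≠ 0 → (∀ g : G, W g uu - uu ∈ K) → uu ∈ W₁ := by
      intro uu hne hmv
      set U := Submodule.span F (Set.range fun g : G => W g uu) with hUdef
      have hUsub : IsSubrep W U := by
        intro g v hv
        induction hv using Submodule.span_induction with
        | mem x hx => ?_
        | zero => rw [map_zero]; exact U.zero_mem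
        | add a b _ _ iha ihb => rw [map_add]; exact U.add_mem iha ihb
        | smul c a _ iha => rw [map_smul]; exact U.smul_mem c iha
        obtain ⟨g', rfl⟩ := hx
        apply Submodule.subset_span
        exact ⟨g * g', by show W (g * g') uu = W g (W g' uu); rw [map_mul, Module.End.mul_apply]⟩
      have huu : uu ∈ U := Submodule.subset_span ⟨1, by show W (1 : G) uu = uu; rw [map_one, Module.End.one_apply]⟩
      have hUle : U ≤ Submodule.span F {uu} ⊔ W₁ := by
        rw [hUdef, Submodule.span_le]
        rintro v ⟨g, rfl⟩
        show W g uu ∈ _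
        have heq : W g uu = uu + (W g uu - uu) := by abel
        rw [heq]
        exact Submodule.add_mem _
          (Submodule.mem_sup_left (Submodule.mem_span_singleton_self uu))
          (Submodule.mem_sup_right (hKle (hmv g)))
      have hfrU : finrank F U ≤ 2 := by
        have hh1 : finrank F U ≤ finrank F ↥(Submodule.span F {uu} ⊔ W₁) :=
          Submodule.finrank_mono hUle
        have hh2 := Submodule.finrank_sup_add_finrank_inf_eq (Submodule.span F {uu}) W₁
        have hh3 : finrank F (Submodule.span F {uu}) = 1 := finrank_span_singleton hne
        omega
      rcases hclass U hUsub with h | h | h | h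
      · exact absurd (h ▸ huu) (by simpa using hne)
      · exact h ▸ huu
      · exfalso
        apply hnot
        intro g v hv
        rw [← h] at hv
        obtain ⟨s, hs, w, hw, rfl⟩ := Submodule.mem_sup.mp (hUle hv)
        obtain ⟨a, rfl⟩ := Submodule.mem_span_singleton.mp hs
        rw [map_add, map_smul, htriv1 g w hw]
        have heq : a • W g uu + w - (a • uu + w) = a • (W g uu - uu) := by
          rw [smul_sub]; abel
        rw [heq]
        exact W₁.smul_mem a (hKle (hmv g))
      · exfalso
        have hb2 : 2 ≤ finrank F W₂ := by
          have := Submodule.finrank_lt_finrank_of_lt h12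
          omega
        have hb3 : 3 ≤ finrank F (⊤ : Submodule F (MonoidAlgebra F (G ⧸ P))) := by
          have := Submodule.finrank_lt_finrank_of_lt h2top
          omega
        rw [h] at hfrU
        omega
    exact two_in_line (le_of_eq hfr1) (hUi u₁ hu₁ne hmove1) (hUi u₂ hu₂ne hmove2) hu₂ne hnem
end

section
/- Let F be an algebraically closed field, H a finite group, and N ⊴ H a normal subgroup with H/N cyclic of order d. Let P, Q ≤ H be subgroups with QN = H, and let g₁, g₂ ∈ H be elements whose double cosets satisfy Pg₁Q ≠ Pg₂Q. Let W be a finite-dimensional simple F[H]-module such that W ≅ Ind_P^H U for some F[P]-module U. For i = 1, 2 set K_i = [Q : (g_i^{-1} P g_i) ∩ Q]. Assume d · gcd(K₁, K₂) ≤ max(K₁, K₂). Then for every composition factor V of Res^H_N W, the restriction of V to Q ∩ N is not a simple F[Q ∩ N]-module. -/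
open Module

section Defs

variable {F : Type} [Field F] {G : Type} [Group G] {V : Type} [AddCommGroup V] [Module F V]

/-- `σ` (a representation on `U`) is a composition factor of `ρ` (a representation on `V`):
there are invariant subspaces `p ≤ q` of `V` and an equivariant `F`-linear surjection
`q → U` whose kernel is exactly `p`, i.e. `q/p ≅ U` as `G`-modules. -/
def IsCompFactor {U : Type} [AddCommGroup U] [Module F U]
    (σ : Representation F G U) (ρ : Representation F G V) : Prop :=
  ∃ (p q : Submodule F V) (_ : IsSubrep ρ p) (hq : IsSubrep ρ q) (_ : p ≤ q)
    (f : ↥q →ₗ[F] U), Function.Surjective f ∧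
      (∀ x : ↥q, f x = 0 ↔ (x : V) ∈ p) ∧
      (∀ (g : G) (x : ↥q), f ⟨ρ g x, hq g x x.2⟩ = σ g (f x))

end Defs

section Induced

variable {F : Type} [Field F] {H : Type} [Group H] (P : Subgroup H)
  {U : Type} [AddCommGroup U] [Module F U]

/-- The carrier of the representation of `H` induced from the representation `ρU` of `P`:
the space of functions `f : H → U` with `f (p * h) = ρU p (f h)`. -/
def indCarrier (ρU : Representation F (↥P) U) : Submodule F (H → U) where
  carrier := {f | ∀ (p : ↥P) (h : H), f ((p : H) * h) = ρU p (f h)}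
  add_mem' := by
    intro a b ha hb p h
    simp only [Pi.add_apply, ha p h, hb p h, map_add]
  zero_mem' := by
    intro p h
    simp
  smul_mem' := by
    intro c f hf p h
    simp only [Pi.smul_apply, hf p h, map_smul]

/-- The representation of `H` induced from the representation `ρU` of the subgroup `P`,
realized on the space `indCarrier P ρU` with `(x • f) h = f (h * x)`. -/
def indRep (ρU : Representation F (↥P) U) : Representation F H ↥(indCarrier P ρU) where
  toFun x :=
    { toFun := fun f => ⟨fun h => (f : H → U) (h * x), by
        intro p h
        simpa [mul_assoc] using f.2 p (h * x)⟩
      map_add' := by intro f g; ext h; simp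
      map_smul' := by intro c f; ext h; simp }
  map_one' := by
    ext f h
    simp
  map_mul' := by
    intro x y
    ext f h
    simp [mul_assoc]

end Induced

/-! ### Auxiliary general representation lemmas -/

section Aux

variable {F : Type} [Field F] {G : Type} [Group G] {V : Type} [AddCommGroup V] [Module F V]

/-- a `ρ`-invariant submodule that is simple (minimal nonzero invariant) -/
def RSimple (ρ : Representation F G V) (S : Submodule F V) : Prop :=
  S ≠ ⊥ ∧ ∀ Z ≤ S, IsSubrep ρ Z → Z = ⊥ ∨ Z = S

lemma isSubrep_sup {ρ : Representation F G V} {p q : Submodule F V}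
    (hp : IsSubrep ρ p) (hq : IsSubrep ρ q) : IsSubrep ρ (p ⊔ q) := by
  intro g v hv
  rcases Submodule.mem_sup.1 hv with ⟨x, hx, y, hy, rfl⟩
  rw [map_add]
  exact Submodule.add_mem_sup (hp g x hx) (hq g y hy)

lemma isSubrep_top (ρ : Representation F G V) : IsSubrep ρ (⊤ : Submodule F V) := by
  intro g v _; trivial

lemma exists_rsimple_le [FiniteDimensional F V] (ρ : Representation F G V) :
    ∀ (n : ℕ) (M : Submodule F V), finrank F M ≤ n → IsSubrep ρ M → M ≠ ⊥ →
      ∃ S ≤ M, IsSubrep ρ S ∧ RSimple ρ S := by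
  intro n
  induction n with
  | zero =>
      intro M hn hM hMne
      exfalso
      exact hMne (Submodule.finrank_eq_zero.1 (Nat.le_zero.1 hn))
  | succ n ih =>
      intro M hn hM hMne
      by_cases hs : ∀ Z ≤ M, IsSubrep ρ Z → Z = ⊥ ∨ Z = M
      · exact ⟨M, le_rfl, hM, hMne, hs⟩
      · push_neg at hs
        obtain ⟨Z, hZM, hZinv, hZbot, hZne⟩ := hs
        have hlt : Z < M := lt_of_le_of_ne hZM hZne
        have : finrank F Z ≤ n := by
          have := Submodule.finrank_lt_finrank_of_lt hlt
          omega
        obtain ⟨S, hSZ, h1, h2⟩ := ih Z this hZinv hZbot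
        exact ⟨S, hSZ.trans hZM, h1, h2⟩

lemma step_core [FiniteDimensional F V] (ρ : Representation F G V) {ι : Type}
    (s : ι → Submodule F V)
    (hinv : ∀ i, IsSubrep ρ (s i)) (hs : ∀ i, RSimple ρ (s i))
    (hsup : ⨆ i, s i = ⊤) {M : Submodule F V} (hM : IsSubrep ρ M) (hMne : M ≠ ⊤) :
    ∃ i, M ⊓ s i = ⊥ ∧ ¬ s i ≤ M := by
  have : ¬ (⨆ i, s i) ≤ M := by rw [hsup]; exact fun h => hMne (top_le_iff.1 h)
  have h2 : ∃ i, ¬ s i ≤ M := by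
    by_contra hc
    push_neg at hc
    exact this (iSup_le hc)
  obtain ⟨i, hi⟩ := h2
  refine ⟨i, ?_, hi⟩
  have := (hs i).2 (M ⊓ s i) inf_le_right
    (by intro g v hv; exact ⟨hM g v hv.1, hinv i g v hv.2⟩)
  rcases this with h | h
  · exact h
  · exact absurd (h ▸ inf_le_left : s i ≤ M) hi

lemma semi_compl [FiniteDimensional F V] (ρ : Representation F G V) {ι : Type}
    (s : ι → Submodule F V)
    (hinv : ∀ i, IsSubrep ρ (s i)) (hs : ∀ i, RSimple ρ (s i))
    (hsup : ⨆ i, s i = ⊤) :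
    ∀ (m : ℕ) (M : Submodule F V), finrank F V - finrank F M ≤ m → IsSubrep ρ M →
      ∃ c, IsSubrep ρ c ∧ M ⊓ c = ⊥ ∧ M ⊔ c = ⊤ := by
  intro m
  induction m with
  | zero =>
      intro M hm hM
      have hMt : M = ⊤ := by
        apply Submodule.eq_top_of_finrank_eq
        have h1 := Submodule.finrank_le M
        omega
      exact ⟨⊥, by intro g v hv; simp only [Submodule.mem_bot] at hv ⊢; simp [hv],
        by simp, by simp [hMt]⟩
  | succ m ih =>
      intro M hm hM
      by_cases hMt : M = ⊤
      · exact ⟨⊥, by intro g v hv; simp only [Submodule.mem_bot] at hv ⊢; simp [hv],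
          by simp, by simp [hMt]⟩
      · obtain ⟨i, hdisj, hnle⟩ := step_core ρ s hinv hs hsup hM hMt
        have hrank : finrank F ↥(M ⊔ s i) = finrank F M + finrank F (s i) := by
          have := Submodule.finrank_sup_add_finrank_inf_eq M (s i)
          rw [hdisj] at this
          simpa using this
        have hpos : 0 < finrank F (s i) := by
          rcases Nat.eq_zero_or_pos (finrank F (s i)) with h | h
          · exact absurd (Submodule.finrank_eq_zero.1 h) (hs i).1
          · exact h
        have hle : finrank F ↥(M ⊔ s i) ≤ finrank F V := Submodule.finrank_le _
        obtain ⟨c, hcinv, hc1, hc2⟩ := ih (M ⊔ s i) (by omega) (isSubrep_sup hM (hinv i))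
        refine ⟨c ⊔ s i, isSubrep_sup hcinv (hinv i), ?_, ?_⟩
        · rw [eq_bot_iff]
          intro v hv
          obtain ⟨hvM, hv2⟩ := hv
          rcases Submodule.mem_sup.1 hv2 with ⟨x, hx, y, hy, rfl⟩
          have hxmem : x ∈ (M ⊔ s i) ⊓ c := by
            constructor
            · have : x = (x + y) - y := by abel
              rw [this]
              exact Submodule.sub_mem _ (Submodule.mem_sup_left hvM)
                (Submodule.mem_sup_right hy)
            · exact hx
          rw [hc1] at hxmem
          have hx0 : x = 0 := by simpa using hxmem
          subst hx0
          have : (0 : V) + y ∈ M ⊓ s i := ⟨by simpa using hvM, by simpa using hy⟩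
          rw [hdisj] at this
          simpa using this
        · rw [← hc2]
          rw [sup_comm c (s i), ← sup_assoc]

lemma semi_dvd [FiniteDimensional F V] (ρ : Representation F G V) {ι : Type}
    (s : ι → Submodule F V)
    (hinv : ∀ i, IsSubrep ρ (s i)) (hs : ∀ i, RSimple ρ (s i))
    (hsup : ⨆ i, s i = ⊤) {n : ℕ} (hn : ∀ i, finrank F (s i) = n) :
    ∀ (m : ℕ) (M : Submodule F V), finrank F V - finrank F M ≤ m → IsSubrep ρ M →
      ∃ k, finrank F V = finrank F M + k * n := by
  intro m
  induction m with
  | zero =>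
      intro M hm hM
      have hMt : M = ⊤ := by
        apply Submodule.eq_top_of_finrank_eq
        have h1 := Submodule.finrank_le M
        omega
      refine ⟨0, ?_⟩
      subst hMt
      simp
  | succ m ih =>
      intro M hm hM
      by_cases hMt : M = ⊤
      · refine ⟨0, ?_⟩; subst hMt; simp
      · obtain ⟨i, hdisj, hnle⟩ := step_core ρ s hinv hs hsup hM hMt
        have hrank : finrank F ↥(M ⊔ s i) = finrank F M + n := by
          have := Submodule.finrank_sup_add_finrank_inf_eq M (s i)
          rw [hdisj, hn i] at this
          simpa using this
        have hpos : 0 < n := by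
          rcases Nat.eq_zero_or_pos n with h | h
          · exact absurd (Submodule.finrank_eq_zero.1 ((hn i).trans h)) (hs i).1
          · exact h
        have hle : finrank F ↥(M ⊔ s i) ≤ finrank F V := Submodule.finrank_le _
        obtain ⟨k, hk⟩ := ih (M ⊔ s i) (by omega) (isSubrep_sup hM (hinv i))
        exact ⟨k + 1, by rw [hk, hrank]; ring⟩

lemma rho_comp (ρ : Representation F G V) (x y : G) (v : V) :
    ρ x (ρ y v) = ρ (x * y) v := by
  rw [map_mul]; rfl

lemma rho_injective (ρ : Representation F G V) (g : G) : Function.Injective (ρ g) := by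
  intro a b hab
  have : ρ g⁻¹ (ρ g a) = ρ g⁻¹ (ρ g b) := by rw [hab]
  simpa [rho_comp] using this

lemma map_end_one (S : Submodule F V) : Submodule.map (1 : V →ₗ[F] V) S = S := by
  ext v
  simp [Submodule.mem_map, Module.End.one_apply]

lemma map_rho_map_rho (ρ : Representation F G V) (x y : G) (S : Submodule F V) :
    (S.map (ρ y)).map (ρ x) = S.map (ρ (x * y)) := by
  rw [map_mul]
  exact (Submodule.map_comp _ _ S).symm

lemma map_rho_inv_cancel (ρ : Representation F G V) (g : G) (S : Submodule F V) :
    (S.map (ρ g)).map (ρ g⁻¹) = S := by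
  rw [map_rho_map_rho, inv_mul_cancel, map_one, map_end_one]

lemma finrank_map_rho (ρ : Representation F G V) (g : G) (S : Submodule F V) :
    finrank F (S.map (ρ g)) = finrank F S :=
  (LinearEquiv.finrank_eq (Submodule.equivMapOfInjective (ρ g) (rho_injective ρ g) S)).symm

lemma isSubrep_map_rho {ρ : Representation F G V} {X : Subgroup G}
    (hX : ∀ (g : G), ∀ x ∈ X, g⁻¹ * x * g ∈ X) (g : G) {S : Submodule F V}
    (hS : IsSubrep (ρ.comp X.subtype) S) : IsSubrep (ρ.comp X.subtype) (S.map (ρ g)) := by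
  rintro x v hv
  rcases Submodule.mem_map.1 hv with ⟨w, hw, rfl⟩
  have key : (ρ.comp X.subtype) x (ρ g w) = ρ g (ρ (g⁻¹ * ↑x * g) w) := by
    show ρ (↑x : G) (ρ g w) = _
    rw [rho_comp, rho_comp]
    congr 1
    group
  rw [key]
  have hmem : ρ (g⁻¹ * ↑x * g) w ∈ S := by
    simpa using hS ⟨g⁻¹ * ↑x * g, hX g ↑x x.2⟩ w hw
  exact Submodule.mem_map_of_mem hmem

lemma rsimple_map_rho {ρ : Representation F G V} {X : Subgroup G}
    (hX : ∀ (g : G), ∀ x ∈ X, g⁻¹ * x * g ∈ X) (g : G) {S : Submodule F V}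
    (hS : RSimple (ρ.comp X.subtype) S) : RSimple (ρ.comp X.subtype) (S.map (ρ g)) := by
  constructor
  · intro hc
    apply hS.1
    have := congrArg (Submodule.map (ρ g⁻¹)) hc
    rw [map_rho_inv_cancel] at this
    simpa using this
  · intro Z hZle hZinv
    have h1 : Z.map (ρ g⁻¹) ≤ S := by
      have := Submodule.map_mono (f := ρ g⁻¹) hZle
      rwa [map_rho_inv_cancel] at this
    have h2 := isSubrep_map_rho hX g⁻¹ hZinv
    rcases hS.2 _ h1 h2 with h | h
    · left
      have := congrArg (Submodule.map (ρ g)) h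
      rw [map_rho_map_rho, mul_inv_cancel, map_one, map_end_one] at this
      simpa using this
    · right
      have := congrArg (Submodule.map (ρ g)) h
      rwa [map_rho_map_rho, mul_inv_cancel, map_one, map_end_one] at this

/-- the sup of all translates of a nonzero invariant submodule is everything,
for an irreducible representation -/
lemma translates_sup_top {ρ : Representation F G V} (hW : IsIrredRep ρ)
    (Z : Submodule F V) (hZ : Z ≠ ⊥) : (⨆ g : G, Z.map (ρ g)) = ⊤ := by
  have hsub : IsSubrep ρ (⨆ g : G, Z.map (ρ g)) := by
    intro g v hv
    have h1 : Submodule.map (ρ g) (⨆ h : G, Z.map (ρ h)) ≤ ⨆ h : G, Z.map (ρ h) := by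
      rw [Submodule.map_iSup]
      apply iSup_le
      intro h
      rw [map_rho_map_rho]
      exact le_iSup (fun h : G => Z.map (ρ h)) (g * h)
    exact h1 (Submodule.mem_map_of_mem hv)
  rcases hW.2 _ hsub with h | h
  · exfalso
    apply hZ
    have hle : Z ≤ ⨆ g : G, Z.map (ρ g) := by
      have : Z.map (ρ 1) ≤ ⨆ g : G, Z.map (ρ g) := le_iSup (fun g : G => Z.map (ρ g)) 1
      rwa [map_one, map_end_one] at this
    rw [h] at hle
    exact le_bot_iff.1 hle
  · exact h

lemma finrank_eq_of_map_eq_top {V₀ : Type} [AddCommGroup V₀] [Module F V₀]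
    (ψ : V →ₗ[F] V₀) (T : Submodule F V)
    (hinj : ∀ w ∈ T, ψ w = 0 → w = 0) (htop : T.map ψ = ⊤) :
    finrank F T = finrank F V₀ := by
  have hji : Function.Injective (ψ.domRestrict T) := by
    rw [← LinearMap.ker_eq_bot]
    rw [LinearMap.ker_eq_bot']
    intro m hm
    exact Subtype.ext (hinj ↑m m.2 hm)
  have h1 := LinearMap.finrank_range_of_inj hji
  rw [LinearMap.range_domRestrict, htop] at h1
  rw [← h1, finrank_top]

end Aux

section Supp

open QuotientGroup

variable {F : Type} [Field F] {H : Type} [Group H] (X : Subgroup H)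
  {U : Type} [AddCommGroup U] [Module F U] (τ : Representation F (↥X) U)

/-- the submodule of the induced module supported on a set `D` (union of right cosets) -/
def suppSub (D : Set H) : Submodule F ↥(indCarrier X τ) where
  carrier := {f | ∀ h ∉ D, ((f : ↥(indCarrier X τ)) : H → U) h = 0}
  add_mem' := by
    intro a b ha hb h hh
    have := ha h hh
    have := hb h hh
    simp_all
  zero_mem' := by intro h hh; rfl
  smul_mem' := by
    intro c f hf h hh
    have := hf h hh
    simp_all

/-- class of `h` in the right-coset space -/
abbrev rcmk (h : H) : Quotient (rightRel X) := Quotient.mk (rightRel X) h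

lemma rcmk_out_rel (h : H) : h * ((rcmk X h).out)⁻¹ ∈ X := by
  have h1 : rcmk X ((rcmk X h).out) = rcmk X h := Quotient.out_eq _
  have h2 := Quotient.exact h1
  exact (QuotientGroup.rightRel_apply).1 h2

lemma rcmk_out_mem_iff {D : Set H} (hD : ∀ x ∈ X, ∀ h ∈ D, x * h ∈ D) (h : H) :
    (rcmk X h).out ∈ D ↔ h ∈ D := by
  constructor
  · intro ho
    have : (h * ((rcmk X h).out)⁻¹) * (rcmk X h).out ∈ D :=
      hD _ (rcmk_out_rel X h) _ ho
    simpa using this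
  · intro hh
    have hx : ((rcmk X h).out) * h⁻¹ ∈ X := by
      have := (inv_mem (rcmk_out_rel X h))
      simpa using this
    have : ((rcmk X h).out * h⁻¹) * h ∈ D := hD _ hx _ hh
    simpa using this

lemma rcmk_mul (x : H) (hx : x ∈ X) (h : H) : rcmk X (x * h) = rcmk X h := by
  apply Quotient.sound
  apply (QuotientGroup.rightRel_apply).2
  simpa using inv_mem hx

/-- extension of τ to all of H by zero -/
noncomputable def tauExt : H → (U →ₗ[F] U) := by
  classical
  exact fun x => if hx : x ∈ X then τ ⟨x, hx⟩ else 0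

lemma tauExt_mul_mem (x : H) (hx : x ∈ X) (y : H) (u : U) :
    tauExt X τ (x * y) u = τ ⟨x, hx⟩ (tauExt X τ y u) := by
  classical
  by_cases hy : y ∈ X
  · have hxy : x * y ∈ X := mul_mem hx hy
    simp only [tauExt, dif_pos hxy, dif_pos hy]
    have : (⟨x * y, hxy⟩ : ↥X) = ⟨x, hx⟩ * ⟨y, hy⟩ := rfl
    rw [this, map_mul]
    rfl
  · have hxy : x * y ∉ X := by
      intro hc
      exact hy (by simpa using mul_mem (inv_mem hx) hc)
    simp only [tauExt, dif_neg hxy, dif_neg hy]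
    simp

lemma tauExt_mem (x : H) (hx : x ∈ X) (u : U) :
    tauExt X τ x u = τ ⟨x, hx⟩ u := by
  simp only [tauExt, dif_pos hx]

lemma suppEval_bij {D : Set H} (hD : ∀ x ∈ X, ∀ h ∈ D, x * h ∈ D) :
    ∃ e : ↥(suppSub X τ D) →ₗ[F] ({c : Quotient (rightRel X) // c.out ∈ D} → U),
      Function.Bijective e := by
  classical
  refine ⟨{ toFun := fun f c => ((f : ↥(indCarrier X τ)) : H → U) c.1.out
            map_add' := by intro a b; ext c; rfl
            map_smul' := by intro m a; ext c; rfl }, ?_, ?_⟩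
  · -- injective
    intro a b hab
    ext h
    show ((a : ↥(indCarrier X τ)) : H → U) h = ((b : ↥(indCarrier X τ)) : H → U) h
    by_cases hh : h ∈ D
    · have hout : (rcmk X h).out ∈ D := (rcmk_out_mem_iff X hD h).2 hh
      have hev : ((a : ↥(indCarrier X τ)) : H → U) (rcmk X h).out
          = ((b : ↥(indCarrier X τ)) : H → U) (rcmk X h).out :=
        congrFun hab ⟨rcmk X h, hout⟩
      have ha2 := (a : ↥(indCarrier X τ)).2 ⟨_, rcmk_out_rel X h⟩ (rcmk X h).out
      have hb2 := (b : ↥(indCarrier X τ)).2 ⟨_, rcmk_out_rel X h⟩ (rcmk X h).out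
      have hcomp : (h * ((rcmk X h).out)⁻¹) * (rcmk X h).out = h := by group
      rw [hcomp] at ha2 hb2
      rw [ha2, hb2, hev]
    · rw [a.2 h hh, b.2 h hh]
  · -- surjective
    intro v
    set v' : Quotient (rightRel X) → U := fun c => if hc : c.out ∈ D then v ⟨c, hc⟩ else 0
      with hv'
    set f₀ : H → U := fun h =>
      if h ∈ D then tauExt X τ (h * ((rcmk X h).out)⁻¹) (v' (rcmk X h)) else 0 with hf₀
    have hf₀ind : f₀ ∈ indCarrier X τ := by
      intro p h
      have hmk : rcmk X ((p : H) * h) = rcmk X h := rcmk_mul X (p : H) p.2 h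
      have hDiff : ((p : H) * h ∈ D) ↔ (h ∈ D) := by
        constructor
        · intro hc
          have : ((p : H))⁻¹ * ((p : H) * h) ∈ D := hD _ (inv_mem p.2) _ hc
          simpa using this
        · intro hc
          exact hD _ p.2 _ hc
      by_cases hh : h ∈ D
      · rw [hf₀]
        simp only [hDiff.2 hh, if_pos, hh, if_pos hh, hmk]
        have harg : (p : H) * h * ((rcmk X h).out)⁻¹ = (p : H) * (h * ((rcmk X h).out)⁻¹) := by
          group
        rw [harg, tauExt_mul_mem X τ (p : H) p.2]
      · rw [hf₀]
        simp only [hmk]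
        rw [if_neg (fun hc => hh (hDiff.1 hc)), if_neg hh, map_zero]
    have hf₀supp : (⟨f₀, hf₀ind⟩ : ↥(indCarrier X τ)) ∈ suppSub X τ D := by
      intro h hh
      show f₀ h = 0
      rw [hf₀]
      simp [hh]
    refine ⟨⟨⟨f₀, hf₀ind⟩, hf₀supp⟩, ?_⟩
    ext c
    obtain ⟨c1, hc1⟩ := c
    show f₀ c1.out = v ⟨c1, hc1⟩
    have hmem : c1.out ∈ D := hc1
    rw [hf₀]
    simp only [if_pos hmem]
    have hout : rcmk X c1.out = c1 := Quotient.out_eq _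
    rw [hout]
    have h1 : c1.out * (c1.out)⁻¹ = 1 := by group
    rw [h1, tauExt_mem X τ 1 (one_mem X)]
    have : (⟨1, one_mem X⟩ : ↥X) = 1 := rfl
    rw [this, map_one]
    show v' c1 = v ⟨c1, hc1⟩
    rw [hv']
    simp [hc1]

end Supp

section Cosets

open QuotientGroup

variable {H : Type} [Group H] (P Q : Subgroup H) (g : H)

/-- the double coset `P g Q` -/
abbrev dcos : Set H := {x : H | ∃ p ∈ P, ∃ q ∈ Q, x = p * g * q}

lemma dcos_left_closed : ∀ x ∈ P, ∀ h ∈ dcos P Q g, x * h ∈ dcos P Q g := by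
  rintro x hx h ⟨p, hp, q, hq, rfl⟩
  exact ⟨x * p, mul_mem hx hp, q, hq, by group⟩

lemma dcos_right_closed : ∀ h ∈ dcos P Q g, ∀ x ∈ Q, h * x ∈ dcos P Q g := by
  rintro h ⟨p, hp, q, hq, rfl⟩ x hx
  exact ⟨p, hp, q * x, mul_mem hq hx, by group⟩

lemma dcos_eq_of_mem {g₁ g₂ : H} {x : H} (h1 : x ∈ dcos P Q g₁) (h2 : x ∈ dcos P Q g₂) :
    dcos P Q g₁ = dcos P Q g₂ := by
  obtain ⟨p₁, hp₁, q₁, hq₁, rfl⟩ := h1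
  obtain ⟨p₂, hp₂, q₂, hq₂, heq⟩ := h2
  ext y
  constructor
  · rintro ⟨p, hp, q, hq, rfl⟩
    refine ⟨p * p₁⁻¹ * p₂, mul_mem (mul_mem hp (inv_mem hp₁)) hp₂,
      q₂ * q₁⁻¹ * q, mul_mem (mul_mem hq₂ (inv_mem hq₁)) hq, ?_⟩
    have hg1 : g₁ = p₁⁻¹ * p₂ * g₂ * q₂ * q₁⁻¹ := by
      calc g₁ = p₁⁻¹ * (p₁ * g₁ * q₁) * q₁⁻¹ := by group
        _ = p₁⁻¹ * (p₂ * g₂ * q₂) * q₁⁻¹ := by rw [heq]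
        _ = p₁⁻¹ * p₂ * g₂ * q₂ * q₁⁻¹ := by group
    rw [hg1]; group
  · rintro ⟨p, hp, q, hq, rfl⟩
    refine ⟨p * p₂⁻¹ * p₁, mul_mem (mul_mem hp (inv_mem hp₂)) hp₁,
      q₁ * q₂⁻¹ * q, mul_mem (mul_mem hq₁ (inv_mem hq₂)) hq, ?_⟩
    have hg2 : g₂ = p₂⁻¹ * p₁ * g₁ * q₁ * q₂⁻¹ := by
      calc g₂ = p₂⁻¹ * (p₂ * g₂ * q₂) * q₂⁻¹ := by group
        _ = p₂⁻¹ * (p₁ * g₁ * q₁) * q₂⁻¹ := by rw [← heq]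
        _ = p₂⁻¹ * p₁ * g₁ * q₁ * q₂⁻¹ := by group
    rw [hg2]; group

abbrev rcmk' (X : Subgroup H) (h : H) : Quotient (rightRel X) := Quotient.mk (rightRel X) h

lemma card_rightRel_quot (X : Subgroup H) :
    Nat.card (Quotient (rightRel X)) = X.index :=
  Nat.card_congr (quotientRightRelEquivQuotientLeftRel X)

lemma card_dcos_classes :
    Nat.card {c : Quotient (rightRel P) // c.out ∈ dcos P Q g}
      = Subgroup.relIndex (P.map (MulAut.conj g⁻¹).toMonoidHom) Q := by
  classical
  set R' : Subgroup ↥Q := (P.map (MulAut.conj g⁻¹).toMonoidHom).subgroupOf Q with hR'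
  have hout : ∀ h : H, (rcmk' P h).out ∈ dcos P Q g ↔ h ∈ dcos P Q g := by
    intro h
    constructor
    · intro ho
      have hx : h * ((rcmk' P h).out)⁻¹ ∈ P := by
        have h1 : rcmk' P ((rcmk' P h).out) = rcmk' P h := Quotient.out_eq _
        exact (QuotientGroup.rightRel_apply).1 (Quotient.exact h1)
      have := dcos_left_closed P Q g _ hx _ ho
      simpa using this
    · intro hh
      have hx : ((rcmk' P h).out) * h⁻¹ ∈ P := by
        have h1 : rcmk' P ((rcmk' P h).out) = rcmk' P h := Quotient.out_eq _
        have := (QuotientGroup.rightRel_apply).1 (Quotient.exact h1)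
        simpa using inv_mem this
      have := dcos_left_closed P Q g _ hx _ hh
      simpa using this
  have hwd : ∀ (q q' : ↥Q), (rightRel R') q q' →
      (⟨rcmk' P (g * ↑q), (hout _).2 ⟨1, one_mem P, ↑q, q.2, by group⟩⟩
        : {c : Quotient (rightRel P) // c.out ∈ dcos P Q g}) =
      ⟨rcmk' P (g * ↑q'), (hout _).2 ⟨1, one_mem P, ↑q', q'.2, by group⟩⟩ := by
    intro q q' hrel
    have hmem : (q' * q⁻¹ : ↥Q) ∈ R' := (QuotientGroup.rightRel_apply).1 hrel
    rw [hR', Subgroup.mem_subgroupOf] at hmem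
    obtain ⟨p, hp, hpe⟩ := hmem
    apply Subtype.ext
    apply Quotient.sound
    apply (QuotientGroup.rightRel_apply).2
    have hpe' : (g⁻¹ * p * g : H) = ↑q' * (↑q)⁻¹ := by
      simpa [MulAut.conj] using hpe
    show (g * ↑q') * (g * ↑q)⁻¹ ∈ P
    have : (g * ↑q') * (g * ↑q)⁻¹ = g * (↑q' * (↑q)⁻¹) * g⁻¹ := by group
    rw [this, ← hpe']
    have : g * (g⁻¹ * p * g) * g⁻¹ = p := by group
    rw [this]
    exact hp
  let e : Quotient (rightRel R') → {c : Quotient (rightRel P) // c.out ∈ dcos P Q g} :=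
    Quotient.lift _ hwd
  have hinj : Function.Injective e := by
    intro a b
    induction a using Quotient.ind
    induction b using Quotient.ind
    rename_i q q'
    intro hab
    apply Quotient.sound
    have h1 : rcmk' P (g * ↑q) = rcmk' P (g * ↑q') := by
      simpa [e, Subtype.ext_iff] using hab
    have h2 : (g * ↑q') * (g * ↑q)⁻¹ ∈ P := (QuotientGroup.rightRel_apply).1 (Quotient.exact h1)
    apply (QuotientGroup.rightRel_apply).2
    rw [hR', Subgroup.mem_subgroupOf]
    refine ⟨g * (↑q' * (↑q)⁻¹) * g⁻¹, by
      have : g * (↑q' * (↑q)⁻¹) * g⁻¹ = (g * ↑q') * (g * ↑q)⁻¹ := by group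
      rw [this]; exact h2, ?_⟩
    show (MulAut.conj g⁻¹) (g * (↑q' * (↑q)⁻¹) * g⁻¹) = ((q' * q⁻¹ : ↥Q) : H)
    simp [MulAut.conj]
    group
  have hsurj : Function.Surjective e := by
    rintro ⟨c, hc⟩
    obtain ⟨p, hp, q, hq, heq⟩ := hc
    refine ⟨Quotient.mk _ (⟨q, hq⟩ : ↥Q), ?_⟩
    apply Subtype.ext
    show rcmk' P (g * q) = c
    have h1 : c = rcmk' P c.out := (Quotient.out_eq _).symm
    rw [h1, heq]
    apply Quotient.sound
    apply (QuotientGroup.rightRel_apply).2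
    show (p * g * q) * (g * q)⁻¹ ∈ P
    have : (p * g * q) * (g * q)⁻¹ = p := by group
    rw [this]
    exact hp
  have hcard := Nat.card_congr (Equiv.ofBijective e ⟨hinj, hsurj⟩)
  rw [← hcard, card_rightRel_quot]
  rfl

end Cosets

section SuppRank

open QuotientGroup

set_option synthInstance.maxHeartbeats 1000000 in
set_option maxHeartbeats 1000000 in
lemma finrank_suppSub {F : Type} [Field F] {H : Type} [Group H] (X : Subgroup H)
    {U : Type} [AddCommGroup U] [Module F U] (τ : Representation F (↥X) U)
    [Finite H] [FiniteDimensional F U] (D : Set H)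
    (hD : ∀ x ∈ X, ∀ h ∈ D, x * h ∈ D) :
    finrank F ↥(suppSub X τ D)
      = Nat.card {c : Quotient (rightRel X) // c.out ∈ D} * finrank F U := by
  classical
  haveI : Finite (Quotient (rightRel X)) := Quotient.finite _
  haveI : Fintype {c : Quotient (rightRel X) // c.out ∈ D} := Fintype.ofFinite _
  obtain ⟨e, he⟩ := suppEval_bij X τ hD
  have h1 : finrank F ↥(suppSub X τ D)
      = finrank F ({c : Quotient (rightRel X) // c.out ∈ D} → U) :=
    LinearEquiv.finrank_eq (LinearEquiv.ofBijective e he)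
  rw [h1, Module.finrank_pi_fintype]
  simp [Finset.sum_const, Nat.card_eq_fintype_card]

end SuppRank

set_option maxHeartbeats 4000000 in
set_option synthInstance.maxHeartbeats 1000000 in
theorem statement_5
    {F : Type} [Field F] [IsAlgClosed F]
    {H : Type} [Group H] [Finite H]
    (N : Subgroup H) [N.Normal] {d : ℕ}
    (hcyc : IsCyclic (H ⧸ N)) (hd : Nat.card (H ⧸ N) = d)
    (P Q : Subgroup H)
    (hQN : ∀ h : H, ∃ q ∈ Q, ∃ n ∈ N, h = q * n)
    (g₁ g₂ : H)
    (hdc : {x : H | ∃ p ∈ P, ∃ q ∈ Q, x = p * g₁ * q} ≠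
           {x : H | ∃ p ∈ P, ∃ q ∈ Q, x = p * g₂ * q})
    {U : Type} [AddCommGroup U] [Module F U] [FiniteDimensional F U]
    (ρU : Representation F (↥P) U)
    -- `W := Ind_P^H U` is a simple `F[H]`-module
    (hW : IsIrredRep (indRep P ρU))
    -- `K_i = [Q : (g_i⁻¹ P g_i) ∩ Q]`
    (K₁ K₂ : ℕ)
    (hK₁ : K₁ = Subgroup.relIndex (P.map (MulAut.conj g₁⁻¹).toMonoidHom) Q)
    (hK₂ : K₂ = Subgroup.relIndex (P.map (MulAut.conj g₂⁻¹).toMonoidHom) Q)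
    (hgcd : d * Nat.gcd K₁ K₂ ≤ max K₁ K₂) :
    ∀ (V₀ : Type) [AddCommGroup V₀] [Module F V₀],
      ∀ σ : Representation F (↥N) V₀, IsIrredRep σ →
        IsCompFactor σ ((indRep P ρU).comp N.subtype) →
        ¬ IsIrredRep (σ.comp (((Q ⊓ N).subgroupOf N).subtype)) := by
  intro V₀ _ _ σ hσ hcf hcontra
  classical
  haveI : Fintype H := Fintype.ofFinite H
  obtain ⟨pp, qq, hppinv, hqqinv, hple, f, hfsurj, hfker, hfequiv⟩ := hcf
  haveI : FiniteDimensional F V₀ := Module.Finite.of_surjective f hfsurj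
  have hV₀ : Nontrivial V₀ := by
    by_contra hc
    rw [not_nontrivial_iff_subsingleton] at hc
    apply hσ.1
    ext v
    simp [Subsingleton.elim v 0]
  haveI := hV₀
  set n₀ := finrank F V₀ with hn₀
  have hn₀pos : 0 < n₀ := Module.finrank_pos
  have hNnorm : ∀ (g : H), ∀ x ∈ N, g⁻¹ * x * g ∈ N := by
    intro g x hx
    have := Subgroup.Normal.conj_mem ‹N.Normal› x hx g⁻¹
    simpa using this
  have htopbot : (⊤ : Submodule F ↥(indCarrier P ρU)) ≠ ⊥ := by
    intro h
    exact hW.1 (by rw [h])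
  -- a simple N-submodule
  obtain ⟨Z, -, hZinv, hZsimp⟩ := exists_rsimple_le ((indRep P ρU).comp N.subtype)
    (finrank F ↥(⊤ : Submodule F ↥(indCarrier P ρU))) ⊤ le_rfl (isSubrep_top _) htopbot
  have hZsup : (⨆ g : H, Z.map (indRep P ρU g)) = ⊤ := translates_sup_top hW Z hZsimp.1
  -- an N-invariant complement to qq
  obtain ⟨cc, hccinv, hcc1, hcc2⟩ := semi_compl ((indRep P ρU).comp N.subtype)
    (fun g : H => Z.map (indRep P ρU g))
    (fun g => isSubrep_map_rho hNnorm g hZinv)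
    (fun g => rsimple_map_rho hNnorm g hZsimp)
    hZsup (finrank F ↥(indCarrier P ρU)) qq (Nat.sub_le _ _) hqqinv
  have hcompl : IsCompl qq cc := ⟨disjoint_iff.2 hcc1, codisjoint_iff.2 hcc2⟩
  -- the N-equivariant surjection φ : W → V₀
  set φ : ↥(indCarrier P ρU) →ₗ[F] V₀ :=
    f.comp (qq.linearProjOfIsCompl cc hcompl) with hφdef
  have hπadd : ∀ (v : ↥(indCarrier P ρU)) (hv : v ∈ qq) (w) (hw : w ∈ cc),
      (qq.linearProjOfIsCompl cc hcompl) (v + w) = ⟨v, hv⟩ := by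
    intro v hv w hw
    rw [map_add]
    have h1 : (qq.linearProjOfIsCompl cc hcompl) v = ⟨v, hv⟩ :=
      Submodule.linearProjOfIsCompl_apply_left hcompl ⟨v, hv⟩
    have h2 : (qq.linearProjOfIsCompl cc hcompl) w = 0 :=
      Submodule.linearProjOfIsCompl_apply_right hcompl ⟨w, hw⟩
    rw [h1, h2, add_zero]
  have hφeq : ∀ (m : ↥N) (v : ↥(indCarrier P ρU)),
      φ (indRep P ρU ↑m v) = σ m (φ v) := by
    intro m v
    have hv : v ∈ qq ⊔ cc := by rw [hcc2]; trivial
    obtain ⟨x, hx, y, hy, rfl⟩ := Submodule.mem_sup.1 hv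
    have hx' : indRep P ρU ↑m x ∈ qq := hqqinv m x hx
    have hy' : indRep P ρU ↑m y ∈ cc := hccinv m y hy
    have h1 : (qq.linearProjOfIsCompl cc hcompl) (x + y) = ⟨x, hx⟩ := hπadd x hx y hy
    have h2 : (qq.linearProjOfIsCompl cc hcompl) (indRep P ρU ↑m (x + y))
        = ⟨indRep P ρU ↑m x, hx'⟩ := by
      rw [map_add]
      exact hπadd _ hx' _ hy'
    show f ((qq.linearProjOfIsCompl cc hcompl) (indRep P ρU ↑m (x + y)))
        = σ m (f ((qq.linearProjOfIsCompl cc hcompl) (x + y)))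
    rw [h1, h2]
    exact hfequiv m ⟨x, hx⟩
  have hφsurj : Function.Surjective φ := by
    intro v
    obtain ⟨x, hx⟩ := hfsurj v
    refine ⟨↑x, ?_⟩
    show f ((qq.projectionOnto cc hcompl) ↑x) = v
    rw [Submodule.linearProjOfIsCompl_apply_left hcompl x, hx]
  -- choose S₀ a simple N-submodule on which φ does not vanish
  have hexists : ∃ g₀ : H, ¬ (Z.map (indRep P ρU g₀) ≤ LinearMap.ker φ) := by
    by_contra hc
    push_neg at hc
    have htot : (⊤ : Submodule F ↥(indCarrier P ρU)) ≤ LinearMap.ker φ := by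
      rw [← hZsup]; exact iSup_le hc
    obtain ⟨v₀, hv₀⟩ := exists_ne (0 : V₀)
    obtain ⟨w, hw⟩ := hφsurj v₀
    have h0 : φ w = 0 := LinearMap.mem_ker.1 (htot Submodule.mem_top)
    exact hv₀ (by rw [← hw, h0])
  obtain ⟨g₀, hg₀⟩ := hexists
  have hS₀inv : IsSubrep ((indRep P ρU).comp N.subtype) (Z.map (indRep P ρU g₀)) :=
    isSubrep_map_rho hNnorm g₀ hZinv
  have hS₀simp : RSimple ((indRep P ρU).comp N.subtype) (Z.map (indRep P ρU g₀)) :=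
    rsimple_map_rho hNnorm g₀ hZsimp
  obtain ⟨w₀, hw₀S, hw₀⟩ : ∃ w ∈ Z.map (indRep P ρU g₀), φ w ≠ 0 := by
    rw [SetLike.le_def] at hg₀
    push_neg at hg₀
    obtain ⟨w, hw1, hw2⟩ := hg₀
    exact ⟨w, hw1, fun hcc => hw2 (LinearMap.mem_ker.2 hcc)⟩
  set S₀ : Submodule F ↥(indCarrier P ρU) := Z.map (indRep P ρU g₀) with hS₀def
  -- the family of translates
  have hs2sup : (⨆ h : H, S₀.map (indRep P ρU h)) = ⊤ :=
    translates_sup_top hW S₀ hS₀simp.1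
  -- membership facts about Q ⊓ N
  have hcoeQ : ∀ x : ↥((Q ⊓ N).subgroupOf N), ((x : ↥N) : H) ∈ Q ∧ ((x : ↥N) : H) ∈ N := by
    intro x
    have hx := x.2
    rw [Subgroup.mem_subgroupOf] at hx
    exact ⟨hx.1, (x : ↥N).2⟩
  -- key per-translate facts
  have key : ∀ h : H,
      IsSubrep (((indRep P ρU).comp N.subtype).comp ((Q ⊓ N).subgroupOf N).subtype)
        (S₀.map (indRep P ρU h)) ∧
      RSimple (((indRep P ρU).comp N.subtype).comp ((Q ⊓ N).subgroupOf N).subtype)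
        (S₀.map (indRep P ρU h)) ∧
      finrank F (S₀.map (indRep P ρU h)) = n₀ := by
    intro h
    obtain ⟨qh, hqhQ, nh, hnhN, hhe⟩ := hQN h
    set ψ : ↥(indCarrier P ρU) →ₗ[F] V₀ := φ.comp (indRep P ρU qh⁻¹) with hψdef
    have hψv : ∀ v, ψ v = φ (indRep P ρU qh⁻¹ v) := fun v => rfl
    have hψtw : ∀ (m : H) (hm : m ∈ N) (v), ψ (indRep P ρU m v)
        = σ ⟨qh⁻¹ * m * qh, hNnorm qh m hm⟩ (ψ v) := by
      intro m hm v
      rw [hψv, hψv, rho_comp]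
      have h1 : (indRep P ρU) (qh⁻¹ * m * qh) ((indRep P ρU) qh⁻¹ v)
          = (indRep P ρU) (qh⁻¹ * m) v := by
        rw [rho_comp]
        have harg : qh⁻¹ * m * qh * qh⁻¹ = qh⁻¹ * m := by group
        rw [harg]
      rw [← h1]
      exact hφeq ⟨qh⁻¹ * m * qh, hNnorm qh m hm⟩ ((indRep P ρU) qh⁻¹ v)
    have hs2hNinv : IsSubrep ((indRep P ρU).comp N.subtype) (S₀.map (indRep P ρU h)) :=
      isSubrep_map_rho hNnorm h hS₀inv
    have hs2hsimp : RSimple ((indRep P ρU).comp N.subtype) (S₀.map (indRep P ρU h)) :=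
      rsimple_map_rho hNnorm h hS₀simp
    have hnh' : qh⁻¹ * h = nh := by rw [hhe]; group
    have hwS : indRep P ρU h w₀ ∈ S₀.map (indRep P ρU h) := Submodule.mem_map_of_mem hw₀S
    have hψw : ψ (indRep P ρU h w₀) ≠ 0 := by
      rw [hψv, rho_comp, hnh']
      have heq2 : φ (indRep P ρU nh w₀) = σ ⟨nh, hnhN⟩ (φ w₀) := hφeq ⟨nh, hnhN⟩ w₀
      rw [heq2]
      intro hcc
      exact hw₀ (rho_injective σ ⟨nh, hnhN⟩ (by rw [hcc, map_zero]))
    -- the image of the translate under ψ is all of V₀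
    have himg_inv : IsSubrep σ ((S₀.map (indRep P ρU h)).map ψ) := by
      intro m v hv
      obtain ⟨t, ht, rfl⟩ := Submodule.mem_map.1 hv
      have hmem : (qh * ↑m * qh⁻¹ : H) ∈ N := by
        have := hNnorm qh⁻¹ ↑m m.2
        simpa using this
      have hsub : (⟨qh⁻¹ * (qh * ↑m * qh⁻¹) * qh, hNnorm qh (qh * ↑m * qh⁻¹) hmem⟩ : ↥N)
          = m := by
        apply Subtype.ext
        show qh⁻¹ * (qh * ↑m * qh⁻¹) * qh = ↑m
        group
      have hstep : σ m (ψ t) = ψ (indRep P ρU (qh * ↑m * qh⁻¹) t) := by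
        rw [hψtw (qh * ↑m * qh⁻¹) hmem t, hsub]
      rw [hstep]
      have hmm2 := hs2hNinv (⟨qh * (↑m : H) * qh⁻¹, hmem⟩ : ↥N) t ht
      exact Submodule.mem_map_of_mem hmm2
    have himg_top : (S₀.map (indRep P ρU h)).map ψ = ⊤ := by
      rcases hσ.2 _ himg_inv with hb | ht
      · exfalso
        apply hψw
        have : ψ (indRep P ρU h w₀) ∈ (S₀.map (indRep P ρU h)).map ψ :=
          Submodule.mem_map_of_mem hwS
        rw [hb] at this
        simpa using this
      · exact ht
    -- ψ is injective on the translate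
    have hker : ∀ w ∈ S₀.map (indRep P ρU h), ψ w = 0 → w = 0 := by
      intro w hw hψ0
      have hKinv : IsSubrep ((indRep P ρU).comp N.subtype)
          (LinearMap.ker ψ ⊓ S₀.map (indRep P ρU h)) := by
        intro m v hv
        have h1 : ψ v = 0 := hv.1
        refine ⟨?_, hs2hNinv m v hv.2⟩
        show ψ ((indRep P ρU) ↑m v) = 0
        rw [hψtw ↑m m.2 v, h1, map_zero]
      rcases hs2hsimp.2 _ inf_le_right hKinv with hb | he
      · have : w ∈ LinearMap.ker ψ ⊓ S₀.map (indRep P ρU h) := ⟨LinearMap.mem_ker.2 hψ0, hw⟩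
        rw [hb] at this
        simpa using this
      · exfalso
        apply hψw
        have hle : S₀.map (indRep P ρU h) ≤ LinearMap.ker ψ := by
          rw [← he]; exact inf_le_left
        exact LinearMap.mem_ker.1 (hle hwS)
    have hrank : finrank F (S₀.map (indRep P ρU h)) = n₀ :=
      finrank_eq_of_map_eq_top ψ _ hker himg_top
    have hinv' : IsSubrep (((indRep P ρU).comp N.subtype).comp ((Q ⊓ N).subgroupOf N).subtype)
        (S₀.map (indRep P ρU h)) := fun x v hv => hs2hNinv (↑x) v hv
    refine ⟨hinv', ⟨hs2hsimp.1, ?_⟩, hrank⟩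
    intro Z' hZ'le hZ'inv
    by_cases hZ'bot : Z' = ⊥
    · left; exact hZ'bot
    right
    have hZ'img_inv : IsSubrep (σ.comp ((Q ⊓ N).subgroupOf N).subtype) (Z'.map ψ) := by
      intro y v hv
      obtain ⟨t, ht, rfl⟩ := Submodule.mem_map.1 hv
      have hyQ := (hcoeQ y).1
      have hyN := (hcoeQ y).2
      have hmemN : (qh * ((y : ↥N) : H) * qh⁻¹ : H) ∈ N := by
        have := hNnorm qh⁻¹ _ hyN
        simpa using this
      have hmemQ : (qh * ((y : ↥N) : H) * qh⁻¹ : H) ∈ Q :=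
        mul_mem (mul_mem hqhQ hyQ) (inv_mem hqhQ)
      have hsub : (⟨qh⁻¹ * (qh * ((y : ↥N) : H) * qh⁻¹) * qh,
          hNnorm qh (qh * ((y : ↥N) : H) * qh⁻¹) hmemN⟩ : ↥N) = (y : ↥N) := by
        apply Subtype.ext
        show qh⁻¹ * (qh * ((y : ↥N) : H) * qh⁻¹) * qh = ((y : ↥N) : H)
        group
      have hstep : σ (↑y) (ψ t) = ψ (indRep P ρU (qh * ((y : ↥N) : H) * qh⁻¹) t) := by
        rw [hψtw (qh * ((y : ↥N) : H) * qh⁻¹) hmemN t, hsub]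
      show σ (↑y) (ψ t) ∈ Z'.map ψ
      rw [hstep]
      refine Submodule.mem_map_of_mem ?_
      have hy' : (⟨qh * ((y : ↥N) : H) * qh⁻¹, hmemN⟩ : ↥N) ∈ (Q ⊓ N).subgroupOf N := by
        rw [Subgroup.mem_subgroupOf]
        exact ⟨hmemQ, hmemN⟩
      exact hZ'inv ⟨⟨qh * ((y : ↥N) : H) * qh⁻¹, hmemN⟩, hy'⟩ t ht
    have hZ'img_top : Z'.map ψ = ⊤ := by
      rcases hcontra.2 _ hZ'img_inv with hb | ht
      · exfalso
        obtain ⟨z, hz, hzne⟩ := Submodule.exists_mem_ne_zero_of_ne_bot hZ'bot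
        have h1 : ψ z ≠ 0 := fun hcc => hzne (hker z (hZ'le hz) hcc)
        have h2 : ψ z ∈ Z'.map ψ := Submodule.mem_map_of_mem hz
        rw [hb] at h2
        exact h1 (by simpa using h2)
      · exact ht
    have hZ'rank : finrank F Z' = n₀ :=
      finrank_eq_of_map_eq_top ψ Z' (fun w hw h0 => hker w (hZ'le hw) h0) hZ'img_top
    exact Submodule.eq_of_le_of_finrank_le hZ'le (by rw [hrank, hZ'rank])
  -- Mackey pieces
  have hM₁inv : IsSubrep (((indRep P ρU).comp N.subtype).comp ((Q ⊓ N).subgroupOf N).subtype)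
      (suppSub P ρU (dcos P Q g₁)) := by
    intro x fel hfel h hh
    show (fel : H → U) (h * ((x : ↥N) : H)) = 0
    apply hfel
    intro hc
    apply hh
    have := dcos_right_closed P Q g₁ _ hc _ (inv_mem (hcoeQ x).1)
    simpa using this
  have hM₂inv : IsSubrep (((indRep P ρU).comp N.subtype).comp ((Q ⊓ N).subgroupOf N).subtype)
      (suppSub P ρU (dcos P Q g₂)) := by
    intro x fel hfel h hh
    show (fel : H → U) (h * ((x : ↥N) : H)) = 0
    apply hfel
    intro hc
    apply hh
    have := dcos_right_closed P Q g₂ _ hc _ (inv_mem (hcoeQ x).1)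
    simpa using this
  -- dimensions of the Mackey pieces
  have hdim1 : finrank F ↥(suppSub P ρU (dcos P Q g₁)) = K₁ * finrank F U := by
    rw [finrank_suppSub P ρU _ (dcos_left_closed P Q g₁), card_dcos_classes, hK₁]
  have hdim2 : finrank F ↥(suppSub P ρU (dcos P Q g₂)) = K₂ * finrank F U := by
    rw [finrank_suppSub P ρU _ (dcos_left_closed P Q g₂), card_dcos_classes, hK₂]
  -- disjointness of the two Mackey pieces
  have hdisj : suppSub P ρU (dcos P Q g₁) ⊓ suppSub P ρU (dcos P Q g₂) = ⊥ := by
    rw [eq_bot_iff]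
    intro fel hfel
    simp only [Submodule.mem_bot]
    apply Subtype.ext
    funext h
    show (fel : H → U) h = (0 : H → U) h
    by_cases hc : h ∈ dcos P Q g₁
    · by_cases hc2 : h ∈ dcos P Q g₂
      · exact absurd (dcos_eq_of_mem P Q hc hc2) hdc
      · exact hfel.2 h hc2
    · exact hfel.1 h hc
  -- the Frobenius bound : dim W ≤ d * n₀
  have hWle : finrank F ↥(indCarrier P ρU) ≤ d * n₀ := by
    obtain ⟨Φ, hΦapp⟩ : ∃ Φ : ↥(indCarrier P ρU) →ₗ[F] ↥(indCarrier N σ),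
        ∀ (v : ↥(indCarrier P ρU)) (h : H),
          ((Φ v : ↥(indCarrier N σ)) : H → V₀) h = φ (indRep P ρU h v) :=
      ⟨{ toFun := fun v => ⟨fun h => φ (indRep P ρU h v), by
          intro m h
          show φ (indRep P ρU ((m : H) * h) v) = σ m (φ (indRep P ρU h v))
          rw [← rho_comp]
          exact hφeq m (indRep P ρU h v)⟩
         map_add' := by
          intro a b
          apply Subtype.ext
          funext h
          show φ (indRep P ρU h (a + b)) = φ (indRep P ρU h a) + φ (indRep P ρU h b)
          rw [map_add, map_add]
         map_smul' := by
          intro c a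
          apply Subtype.ext
          funext h
          show φ (indRep P ρU h (c • a)) = c • φ (indRep P ρU h a)
          rw [map_smul, map_smul] }, fun v h => rfl⟩
    have hkerinv : IsSubrep (indRep P ρU) (LinearMap.ker Φ) := by
      intro g v hv
      rw [LinearMap.mem_ker] at hv ⊢
      apply Subtype.ext
      funext h
      have hz : ((Φ (indRep P ρU g v) : ↥(indCarrier N σ)) : H → V₀) h
          = φ (indRep P ρU (h * g) v) := by
        rw [hΦapp, rho_comp]
      have hv2 := congrArg (fun z : ↥(indCarrier N σ) => ((z : ↥(indCarrier N σ)) : H → V₀) (h * g)) hv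
      simp only [hΦapp] at hv2
      show ((Φ (indRep P ρU g v) : ↥(indCarrier N σ)) : H → V₀) h
          = ((0 : ↥(indCarrier N σ)) : H → V₀) h
      rw [hz]
      simpa using hv2
    have hker0 : LinearMap.ker Φ = ⊥ := by
      rcases hW.2 _ hkerinv with hb | ht
      · exact hb
      · exfalso
        obtain ⟨v₀, hv₀⟩ := exists_ne (0 : V₀)
        obtain ⟨w, hw⟩ := hφsurj v₀
        have hwker : w ∈ LinearMap.ker Φ := by rw [ht]; trivial
        have h1 : ((Φ w : ↥(indCarrier N σ)) : H → V₀) 1 = 0 := by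
          rw [LinearMap.mem_ker.1 hwker]
          rfl
        rw [hΦapp, map_one] at h1
        apply hv₀
        rw [← hw]
        simpa using h1
    have hinj : Function.Injective Φ := LinearMap.ker_eq_bot.1 hker0
    have hle := LinearMap.finrank_le_finrank_of_injective hinj
    have hCod : finrank F ↥(indCarrier N σ) = d * n₀ := by
      have h1 : suppSub N σ Set.univ = ⊤ := by
        rw [eq_top_iff]
        intro fel _
        intro h hh
        exact absurd (Set.mem_univ h) hh
      have h2 := finrank_suppSub N σ Set.univ (by intro x hx h hh; trivial)
      rw [h1, finrank_top] at h2
      have h3 : Nat.card {c : Quotient (QuotientGroup.rightRel N) //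
          c.out ∈ (Set.univ : Set H)} = d := by
        have he : {c : Quotient (QuotientGroup.rightRel N) // c.out ∈ (Set.univ : Set H)}
            ≃ Quotient (QuotientGroup.rightRel N) :=
          Equiv.subtypeUnivEquiv (fun c => Set.mem_univ _)
        rw [Nat.card_congr he, card_rightRel_quot, ← hd]
        rfl
      rw [h3] at h2
      exact h2
    rw [hCod] at hle
    exact hle
  -- sum of Mackey dims is at most dim W
  have hsum : finrank F ↥(suppSub P ρU (dcos P Q g₁))
      + finrank F ↥(suppSub P ρU (dcos P Q g₂)) ≤ finrank F ↥(indCarrier P ρU) := by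
    have h1 := Submodule.finrank_sup_add_finrank_inf_eq
      (suppSub P ρU (dcos P Q g₁)) (suppSub P ρU (dcos P Q g₂))
    rw [hdisj] at h1
    have h2 : finrank F (⊥ : Submodule F ↥(indCarrier P ρU)) = 0 := finrank_bot F _
    have h3 := Submodule.finrank_le (suppSub P ρU (dcos P Q g₁) ⊔ suppSub P ρU (dcos P Q g₂))
    omega
  -- semisimple dimension counting
  obtain ⟨k₀, hk₀⟩ := semi_dvd (((indRep P ρU).comp N.subtype).comp
      ((Q ⊓ N).subgroupOf N).subtype) (fun h : H => S₀.map (indRep P ρU h))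
    (fun h => (key h).1) (fun h => (key h).2.1) hs2sup (fun h => (key h).2.2)
    (finrank F ↥(indCarrier P ρU)) ⊥ (Nat.sub_le _ _)
    (by intro g v hv; simp only [Submodule.mem_bot] at hv ⊢; simp [hv])
  rw [finrank_bot, zero_add] at hk₀
  obtain ⟨k₁, hk₁'⟩ := semi_dvd (((indRep P ρU).comp N.subtype).comp
      ((Q ⊓ N).subgroupOf N).subtype) (fun h : H => S₀.map (indRep P ρU h))
    (fun h => (key h).1) (fun h => (key h).2.1) hs2sup (fun h => (key h).2.2)
    (finrank F ↥(indCarrier P ρU)) (suppSub P ρU (dcos P Q g₁)) (Nat.sub_le _ _) hM₁inv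
  obtain ⟨k₂, hk₂'⟩ := semi_dvd (((indRep P ρU).comp N.subtype).comp
      ((Q ⊓ N).subgroupOf N).subtype) (fun h : H => S₀.map (indRep P ρU h))
    (fun h => (key h).1) (fun h => (key h).2.1) hs2sup (fun h => (key h).2.2)
    (finrank F ↥(indCarrier P ρU)) (suppSub P ρU (dcos P Q g₂)) (Nat.sub_le _ _) hM₂inv
  rw [hdim1] at hk₁'
  rw [hdim2] at hk₂'
  -- positivity facts
  have haU : 0 < finrank F U := by
    rcases Nat.eq_zero_or_pos (finrank F U) with h0 | hpos
    · exfalso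
      have hsub : Subsingleton U := Module.finrank_zero_iff.1 h0
      apply hW.1
      have hsub2 : Subsingleton ↥(indCarrier P ρU) := by
        constructor
        intro a b
        apply Subtype.ext
        funext h
        exact Subsingleton.elim _ _
      exact Subsingleton.elim _ _
    · exact hpos
  have hK₁pos : 0 < K₁ := by
    rw [hK₁, ← card_dcos_classes P Q g₁]
    haveI : Finite (Quotient (QuotientGroup.rightRel P)) := Quotient.finite _
    haveI : Nonempty {c : Quotient (QuotientGroup.rightRel P) // c.out ∈ dcos P Q g₁} :=
      ⟨⟨Quotient.mk _ g₁, (rcmk_out_mem_iff P (dcos_left_closed P Q g₁) g₁).2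
        ⟨1, one_mem P, 1, one_mem Q, by group⟩⟩⟩
    exact Nat.card_pos
  have hK₂pos : 0 < K₂ := by
    rw [hK₂, ← card_dcos_classes P Q g₂]
    haveI : Finite (Quotient (QuotientGroup.rightRel P)) := Quotient.finite _
    haveI : Nonempty {c : Quotient (QuotientGroup.rightRel P) // c.out ∈ dcos P Q g₂} :=
      ⟨⟨Quotient.mk _ g₂, (rcmk_out_mem_iff P (dcos_left_closed P Q g₂) g₂).2
        ⟨1, one_mem P, 1, one_mem Q, by group⟩⟩⟩
    exact Nat.card_pos
  -- n₀ divides K₁ * a and K₂ * a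
  have hdvd1 : n₀ ∣ K₁ * finrank F U := by
    have hle : k₁ ≤ k₀ := by
      have h1 : k₁ * n₀ ≤ k₀ * n₀ := by omega
      exact Nat.le_of_mul_le_mul_right h1 hn₀pos
    refine ⟨k₀ - k₁, ?_⟩
    have h2 : (k₀ - k₁) * n₀ = k₀ * n₀ - k₁ * n₀ := Nat.sub_mul k₀ k₁ n₀
    have h3 : K₁ * finrank F U = (k₀ - k₁) * n₀ := by omega
    rw [h3, Nat.mul_comm]
  have hdvd2 : n₀ ∣ K₂ * finrank F U := by
    have hle : k₂ ≤ k₀ := by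
      have h1 : k₂ * n₀ ≤ k₀ * n₀ := by omega
      exact Nat.le_of_mul_le_mul_right h1 hn₀pos
    refine ⟨k₀ - k₂, ?_⟩
    have h2 : (k₀ - k₂) * n₀ = k₀ * n₀ - k₂ * n₀ := Nat.sub_mul k₀ k₂ n₀
    have h3 : K₂ * finrank F U = (k₀ - k₂) * n₀ := by omega
    rw [h3, Nat.mul_comm]
  have hdvdg : n₀ ∣ finrank F U * Nat.gcd K₁ K₂ := by
    rw [← Nat.gcd_mul_left]
    exact Nat.dvd_gcd (by rw [Nat.mul_comm]; exact hdvd1) (by rw [Nat.mul_comm]; exact hdvd2)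
  have hn₀le : n₀ ≤ finrank F U * Nat.gcd K₁ K₂ :=
    Nat.le_of_dvd (Nat.mul_pos haU (Nat.gcd_pos_of_pos_left K₂ hK₁pos)) hdvdg
  -- final chain
  have hA1 : K₁ * finrank F U + K₂ * finrank F U ≤ finrank F ↥(indCarrier P ρU) := by
    rw [← hdim1, ← hdim2]
    exact hsum
  have hA3 : d * n₀ ≤ d * (finrank F U * Nat.gcd K₁ K₂) := Nat.mul_le_mul_left d hn₀le
  have hA4 : d * (finrank F U * Nat.gcd K₁ K₂) = finrank F U * (d * Nat.gcd K₁ K₂) := by ring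
  have hA5 : finrank F U * (d * Nat.gcd K₁ K₂) ≤ finrank F U * max K₁ K₂ :=
    Nat.mul_le_mul_left (finrank F U) hgcd
  have hfin : K₁ * finrank F U + K₂ * finrank F U ≤ finrank F U * max K₁ K₂ := by
    calc K₁ * finrank F U + K₂ * finrank F U
        ≤ finrank F ↥(indCarrier P ρU) := hA1
      _ ≤ d * n₀ := hWle
      _ ≤ d * (finrank F U * Nat.gcd K₁ K₂) := hA3
      _ = finrank F U * (d * Nat.gcd K₁ K₂) := hA4
      _ ≤ finrank F U * max K₁ K₂ := hA5
  have hKK : K₁ + K₂ ≤ max K₁ K₂ := by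
    have h6 : finrank F U * (K₁ + K₂) ≤ finrank F U * max K₁ K₂ := by
      rw [Nat.mul_add, Nat.mul_comm (finrank F U) K₁, Nat.mul_comm (finrank F U) K₂]
      exact hfin
    exact Nat.le_of_mul_le_mul_left h6 haU
  rcases max_cases K₁ K₂ with ⟨hm, -⟩ | ⟨hm, -⟩ <;> omega
end

section
/- Let F be an algebraically closed field, G a finite group, and P ≤ G a subgroup. Let U and V be finite-dimensional simple F[G]-modules such that dim_F End_{F[P]}(Res^G_P U) ≥ 2 and dim_F End_{F[P]}(Res^G_P V) ≥ 2, and such that the induced module W := Ind_P^G(1_P) satisfies condition (★). Then the tensor product U ⊗_F V, with the diagonal G-action, is not a simple F[G]-module. -/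
open Module Pointwise

variable {F : Type} [Field F]

set_option linter.unusedSectionVars false
set_option maxHeartbeats 1000000



section Aux

variable {G : Type} [Group G] {M : Type} [AddCommGroup M] [Module F M]

/-- Conjugation action of `G` on endomorphisms, as a linear map. -/
def cnjL (ρ : Representation F G M) (g : G) : (M →ₗ[F] M) →ₗ[F] (M →ₗ[F] M) where
  toFun a := ρ g ∘ₗ a ∘ₗ ρ g⁻¹
  map_add' a b := by simp [LinearMap.add_comp, LinearMap.comp_add]
  map_smul' c a := by simp [LinearMap.smul_comp, LinearMap.comp_smul]

lemma cnjL_apply (ρ : Representation F G M) (g : G) (a : M →ₗ[F] M) :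
    cnjL ρ g a = ρ g ∘ₗ a ∘ₗ ρ g⁻¹ := rfl

lemma rho_comp_rho (ρ : Representation F G M) (g h : G) :
    ρ g ∘ₗ ρ h = ρ (g * h) := by
  rw [← Module.End.mul_eq_comp, ← map_mul]

lemma rho_inv_comp (ρ : Representation F G M) (g : G) :
    ρ g⁻¹ ∘ₗ ρ g = LinearMap.id := by
  rw [rho_comp_rho, inv_mul_cancel, map_one, Module.End.one_eq_id]

lemma rho_comp_inv (ρ : Representation F G M) (g : G) :
    ρ g ∘ₗ ρ g⁻¹ = LinearMap.id := by
  rw [rho_comp_rho, mul_inv_cancel, map_one, Module.End.one_eq_id]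

lemma cnjL_one (ρ : Representation F G M) (a : M →ₗ[F] M) : cnjL ρ 1 a = a := by
  simp [cnjL_apply, Module.End.one_eq_id]

lemma cnjL_cnjL (ρ : Representation F G M) (g h : G) (a : M →ₗ[F] M) :
    cnjL ρ g (cnjL ρ h a) = cnjL ρ (g * h) a := by
  simp only [cnjL_apply, ← LinearMap.comp_assoc]
  rw [rho_comp_rho]
  simp only [LinearMap.comp_assoc, rho_comp_rho, mul_inv_rev]

lemma cnjL_id (ρ : Representation F G M) (g : G) :
    cnjL ρ g LinearMap.id = LinearMap.id := by
  simp [cnjL_apply, rho_comp_inv]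

lemma cnjL_eq_iff_comm (ρ : Representation F G M) (g : G) (f : M →ₗ[F] M) :
    cnjL ρ g f = f ↔ f ∘ₗ ρ g = ρ g ∘ₗ f := by
  rw [cnjL_apply]
  constructor
  · intro h
    calc f ∘ₗ ρ g = (ρ g ∘ₗ f ∘ₗ ρ g⁻¹) ∘ₗ ρ g := by rw [h]
      _ = ρ g ∘ₗ f := by
          simp only [LinearMap.comp_assoc, rho_inv_comp, LinearMap.comp_id]
  · intro h
    rw [← LinearMap.comp_assoc, ← h, LinearMap.comp_assoc, rho_comp_inv,
      LinearMap.comp_id]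

lemma nontrivial_of_irred {ρ : Representation F G M} (h : IsIrredRep ρ) :
    Nontrivial M := by
  by_contra hn
  rw [not_nontrivial_iff_subsingleton] at hn
  apply h.1
  ext v
  simp [Subsingleton.elim v 0]

/-- Schur's lemma. -/
lemma schur_scalar [IsAlgClosed F] [FiniteDimensional F M]
    {ρ : Representation F G M} (h : IsIrredRep ρ) (f : M →ₗ[F] M)
    (hf : ∀ g : G, f ∘ₗ ρ g = ρ g ∘ₗ f) : ∃ c : F, f = c • LinearMap.id := by
  have : Nontrivial M := nontrivial_of_irred h
  obtain ⟨c, hc⟩ := Module.End.exists_eigenvalue (f : Module.End F M)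
  refine ⟨c, ?_⟩
  have hsub : IsSubrep ρ (Module.End.eigenspace f c) := by
    intro g v hv
    rw [Module.End.mem_eigenspace_iff] at hv ⊢
    have := congrArg (fun φ => φ v) (hf g)
    simp only [LinearMap.comp_apply] at this
    rw [this, hv, map_smul]
  rcases h.2 _ hsub with h0 | htop
  · exact absurd h0 hc
  · ext v
    have hv : v ∈ Module.End.eigenspace f c := htop ▸ Submodule.mem_top
    rw [Module.End.mem_eigenspace_iff] at hv
    simpa using hv

lemma trace_comp_comm'' [FiniteDimensional F M] (p q : M →ₗ[F] M) :
    LinearMap.trace F M (p ∘ₗ q) = LinearMap.trace F M (q ∘ₗ p) := by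
  rw [← Module.End.mul_eq_comp, ← Module.End.mul_eq_comp, LinearMap.trace_mul_comm]

/-- Nondegeneracy of the trace pairing on endomorphisms. -/
lemma trace_faithful [FiniteDimensional F M] (a : M →ₗ[F] M)
    (h : ∀ x : M →ₗ[F] M, LinearMap.trace F M (a ∘ₗ x) = 0) : a = 0 := by
  ext u
  rw [LinearMap.zero_apply]
  rw [← Module.forall_dual_apply_eq_zero_iff F]
  intro φ
  have := h (φ.smulRight u)
  have hcomp : a ∘ₗ φ.smulRight u = φ.smulRight (a u) := by
    ext w; simp
  rw [hcomp] at this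
  have hd : LinearMap.smulRight φ (a u) = dualTensorHom F M M (φ ⊗ₜ[F] (a u)) := by
    ext w; simp
  rwa [hd, LinearMap.trace_eq_contract_apply, contractLeft_apply] at this

end Aux

section Coset

variable {G : Type} [Group G] {M : Type} [AddCommGroup M] [Module F M]
variable (ρ : Representation F G M) (P : Subgroup G)

lemma mem_commutant_iff (a : M →ₗ[F] M) :
    a ∈ repCommutant (ρ.comp P.subtype) ↔ ∀ p : P, a ∘ₗ ρ ↑p = ρ ↑p ∘ₗ a :=
  Iff.rfl

lemma cnjL_fix_of_mem {a : M →ₗ[F] M} (ha : a ∈ repCommutant (ρ.comp P.subtype))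
    {p : G} (hp : p ∈ P) : cnjL ρ p a = a := by
  rw [cnjL_eq_iff_comm]
  exact ha ⟨p, hp⟩

/-- Conjugate of a `P`-fixed endomorphism by a coset. -/
def ccnj {a : M →ₗ[F] M} (ha : a ∈ repCommutant (ρ.comp P.subtype)) :
    G ⧸ P → (M →ₗ[F] M) :=
  Quotient.lift (fun g => cnjL ρ g a) (by
    intro g g' hgg'
    have h : g⁻¹ * g' ∈ P := QuotientGroup.leftRel_apply.mp hgg'
    show cnjL ρ g a = cnjL ρ g' a
    have e : cnjL ρ g' a = cnjL ρ g (cnjL ρ (g⁻¹ * g') a) := by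
      rw [cnjL_cnjL]; congr 1; group
    rw [e, cnjL_fix_of_mem ρ P ha h])

lemma ccnj_mk {a : M →ₗ[F] M} (ha : a ∈ repCommutant (ρ.comp P.subtype)) (g : G) :
    ccnj ρ P ha (QuotientGroup.mk g) = cnjL ρ g a := rfl

lemma ccnj_one {a : M →ₗ[F] M} (ha : a ∈ repCommutant (ρ.comp P.subtype)) :
    ccnj ρ P ha (QuotientGroup.mk (1 : G)) = a := by
  rw [ccnj_mk, cnjL_one]

lemma ccnj_smul {a : M →ₗ[F] M} (ha : a ∈ repCommutant (ρ.comp P.subtype))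
    (g : G) (c : G ⧸ P) :
    ccnj ρ P ha (g • c) = cnjL ρ g (ccnj ρ P ha c) := by
  induction c using Quotient.ind with
  | _ h =>
    have : (Quotient.mk _ h : G ⧸ P) = QuotientGroup.mk h := rfl
    rw [this, MulAction.Quotient.smul_mk, ccnj_mk, ccnj_mk, cnjL_cnjL, smul_eq_mul]

/-- The permutation representation on `G ⧸ P`. -/
lemma ofMulAction_apply' (g : G) (w : MonoidAlgebra F (G ⧸ P)) (c : G ⧸ P) :
    (Representation.ofMulAction F G (G ⧸ P) g w).coeff c = w.coeff (g⁻¹ • c) := by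
  exact Representation.coeff_ofMulAction g w c

variable [Fintype (G ⧸ P)] [FiniteDimensional F M]

/-- The map `x ↦ (c ↦ tr((c·a) ∘ x))` from endomorphisms to the permutation module. -/
noncomputable def bmap {a : M →ₗ[F] M} (ha : a ∈ repCommutant (ρ.comp P.subtype)) :
    (M →ₗ[F] M) →ₗ[F] MonoidAlgebra F (G ⧸ P) :=
  (MonoidAlgebra.coeffLinearEquiv F).symm.toLinearMap ∘ₗ
  (Finsupp.linearEquivFunOnFinite F F (G ⧸ P)).symm.toLinearMap ∘ₗ
    LinearMap.pi (fun c => (LinearMap.trace F M) ∘ₗ (LinearMap.llcomp F M M M (ccnj ρ P ha c)))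

lemma bmap_apply {a : M →ₗ[F] M} (ha : a ∈ repCommutant (ρ.comp P.subtype))
    (x : M →ₗ[F] M) (c : G ⧸ P) :
    (bmap ρ P ha x).coeff c = LinearMap.trace F M (ccnj ρ P ha c ∘ₗ x) := rfl

/-- The map `w ↦ Σ_c w(c) • (c·b)` from the permutation module to endomorphisms. -/
noncomputable def pmap {b : M →ₗ[F] M} (hb : b ∈ repCommutant (ρ.comp P.subtype)) :
    MonoidAlgebra F (G ⧸ P) →ₗ[F] (M →ₗ[F] M) :=
  Finsupp.lsum F (fun c => LinearMap.toSpanSingleton F _ (ccnj ρ P hb c)) ∘ₗ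
    (MonoidAlgebra.coeffLinearEquiv F).toLinearMap

lemma pmap_single {b : M →ₗ[F] M} (hb : b ∈ repCommutant (ρ.comp P.subtype))
    (c : G ⧸ P) (r : F) :
    pmap ρ P hb (MonoidAlgebra.single c r) = r • ccnj ρ P hb c := by
  show Finsupp.lsum F (fun c => LinearMap.toSpanSingleton F _ (ccnj ρ P hb c))
    (Finsupp.single c r) = _
  rw [Finsupp.lsum_single]; rfl

lemma pmap_eq_sum {b : M →ₗ[F] M} (hb : b ∈ repCommutant (ρ.comp P.subtype))
    (w : MonoidAlgebra F (G ⧸ P)) :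
    pmap ρ P hb w = ∑ c : G ⧸ P, w.coeff c • ccnj ρ P hb c := by
  show Finsupp.lsum F (fun c => LinearMap.toSpanSingleton F _ (ccnj ρ P hb c)) w.coeff = _
  rw [Finsupp.lsum_apply]
  rw [Finsupp.sum_fintype]
  · rfl
  · intro c; simp

lemma bmap_equivariant {a : M →ₗ[F] M} (ha : a ∈ repCommutant (ρ.comp P.subtype))
    (g : G) (x : M →ₗ[F] M) :
    bmap ρ P ha (cnjL ρ g x) = Representation.ofMulAction F G (G ⧸ P) g (bmap ρ P ha x) := by
  ext c
  rw [ofMulAction_apply', bmap_apply, bmap_apply, ccnj_smul]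
  rw [cnjL_apply, cnjL_apply]
  calc LinearMap.trace F M (ccnj ρ P ha c ∘ₗ ρ g ∘ₗ x ∘ₗ ρ g⁻¹)
      = LinearMap.trace F M (((ccnj ρ P ha c ∘ₗ ρ g) ∘ₗ x) ∘ₗ ρ g⁻¹) := by
        simp only [LinearMap.comp_assoc]
    _ = LinearMap.trace F M (ρ g⁻¹ ∘ₗ ((ccnj ρ P ha c ∘ₗ ρ g) ∘ₗ x)) :=
        trace_comp_comm'' _ _
    _ = LinearMap.trace F M ((ρ g⁻¹ ∘ₗ ccnj ρ P ha c ∘ₗ ρ g⁻¹⁻¹) ∘ₗ x) := by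
        simp only [inv_inv, LinearMap.comp_assoc]

lemma pmap_equivariant {b : M →ₗ[F] M} (hb : b ∈ repCommutant (ρ.comp P.subtype))
    (g : G) (w : MonoidAlgebra F (G ⧸ P)) :
    pmap ρ P hb (Representation.ofMulAction F G (G ⧸ P) g w) = cnjL ρ g (pmap ρ P hb w) := by
  have : pmap ρ P hb ∘ₗ (Representation.ofMulAction F G (G ⧸ P) g : MonoidAlgebra F (G ⧸ P) →ₗ[F] _)
      = cnjL ρ g ∘ₗ pmap ρ P hb := by
    apply MonoidAlgebra.lhom_ext'
    intro c
    apply LinearMap.ext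
    intro r
    simp only [LinearMap.comp_apply, MonoidAlgebra.lsingle_apply]
    have h1 : Representation.ofMulAction F G (G ⧸ P) g (MonoidAlgebra.single c r)
        = MonoidAlgebra.single (g • c) r := by
      rw [Representation.ofMulAction_single]
    rw [h1, pmap_single, pmap_single, ccnj_smul, map_smul]
  exact congrArg (fun φ => φ w) this

section Exists

variable {G : Type} [Group G] {M : Type} [AddCommGroup M] [Module F M]

lemma commutant_scalar_contra [FiniteDimensional F M] [Nontrivial M]
    {S : Submodule F (M →ₗ[F] M)} (h2 : 2 ≤ finrank F S)
    (hsc : ∀ a ∈ S, ∃ γ : F, a = γ • (LinearMap.id : M →ₗ[F] M)) : False := by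
  have hle : S ≤ Submodule.span F {(LinearMap.id : M →ₗ[F] M)} := by
    intro a haS
    obtain ⟨γ, hγ⟩ := hsc a haS
    rw [hγ]
    exact Submodule.smul_mem _ _ (Submodule.mem_span_singleton_self _)
  have hid : (LinearMap.id : M →ₗ[F] M) ≠ 0 := by
    intro h
    obtain ⟨v, hv⟩ := exists_ne (0 : M)
    exact hv (by simpa using congrArg (fun φ => φ v) h)
  have := Submodule.finrank_mono (R := F) hle
  rw [finrank_span_singleton hid] at this
  omega

variable (P : Subgroup G) [Fintype (G ⧸ P)]

lemma exists_bmap_not_mem [IsAlgClosed F] [FiniteDimensional F M]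
    {ρ : Representation F G M} (hirr : IsIrredRep ρ)
    (h2 : 2 ≤ finrank F (repCommutant (ρ.comp P.subtype)))
    (N : Submodule F (MonoidAlgebra F (G ⧸ P)))
    (hN : TrivialOn (Representation.ofMulAction F G (G ⧸ P)) N) :
    ∃ (a : M →ₗ[F] M) (ha : a ∈ repCommutant (ρ.comp P.subtype)) (x : M →ₗ[F] M),
      bmap ρ P ha x ∉ N := by
  by_contra hcon
  push_neg at hcon
  have : Nontrivial M := nontrivial_of_irred hirr
  refine commutant_scalar_contra h2 (fun a ha => ?_)
  have hfix : ∀ (g : G) (x : M →ₗ[F] M),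
      LinearMap.trace F M (a ∘ₗ cnjL ρ g x) = LinearMap.trace F M (a ∘ₗ x) := by
    intro g x
    have h1 := bmap_equivariant ρ P ha g x
    have h2' : Representation.ofMulAction F G (G ⧸ P) g (bmap ρ P ha x) = bmap ρ P ha x :=
      hN g _ (hcon a ha x)
    have h3 := congrArg (fun w : MonoidAlgebra F (G ⧸ P) => w.coeff (QuotientGroup.mk (1 : G)))
      (h1.trans h2')
    simpa only [bmap_apply, ccnj_one] using h3
  have hconj : ∀ g : G, cnjL ρ g a = a := by
    intro g
    have hz : ∀ x : M →ₗ[F] M,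
        LinearMap.trace F M ((cnjL ρ g⁻¹ a - a) ∘ₗ x) = 0 := by
      intro x
      rw [LinearMap.sub_comp, map_sub, sub_eq_zero]
      have := hfix g x
      calc LinearMap.trace F M (cnjL ρ g⁻¹ a ∘ₗ x)
          = LinearMap.trace F M ((ρ g⁻¹ ∘ₗ a ∘ₗ ρ g⁻¹⁻¹) ∘ₗ x) := by rw [cnjL_apply]
        _ = LinearMap.trace F M (ρ g⁻¹ ∘ₗ ((a ∘ₗ ρ g) ∘ₗ x)) := by
            simp only [inv_inv, LinearMap.comp_assoc]
        _ = LinearMap.trace F M (((a ∘ₗ ρ g) ∘ₗ x) ∘ₗ ρ g⁻¹) := trace_comp_comm'' _ _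
        _ = LinearMap.trace F M (a ∘ₗ cnjL ρ g x) := by
            rw [cnjL_apply]; simp only [LinearMap.comp_assoc]
        _ = LinearMap.trace F M (a ∘ₗ x) := this
    have hsub : cnjL ρ g⁻¹ a - a = 0 := trace_faithful _ hz
    have h4 : cnjL ρ g⁻¹ a = a := by rwa [sub_eq_zero] at hsub
    have := congrArg (cnjL ρ g) h4
    rw [cnjL_cnjL, mul_inv_cancel, cnjL_one] at this
    exact this.symm
  have hcomm : ∀ g : G, a ∘ₗ ρ g = ρ g ∘ₗ a :=
    fun g => (cnjL_eq_iff_comm ρ g a).mp (hconj g)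
  exact schur_scalar hirr a hcomm

lemma exists_pmap_not_invariant [IsAlgClosed F] [FiniteDimensional F M]
    {ρ : Representation F G M} (hirr : IsIrredRep ρ)
    (h2 : 2 ≤ finrank F (repCommutant (ρ.comp P.subtype))) :
    ∃ (b : M →ₗ[F] M) (hb : b ∈ repCommutant (ρ.comp P.subtype))
      (g : G) (w : MonoidAlgebra F (G ⧸ P)),
      pmap ρ P hb (Representation.ofMulAction F G (G ⧸ P) g w) ≠ pmap ρ P hb w := by
  by_contra hcon
  push_neg at hcon
  have : Nontrivial M := nontrivial_of_irred hirr
  refine commutant_scalar_contra h2 (fun b hb => ?_)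
  have hconj : ∀ g : G, cnjL ρ g b = b := by
    intro g
    have h1 := pmap_equivariant ρ P hb g (MonoidAlgebra.single (QuotientGroup.mk (1 : G)) (1 : F))
    rw [hcon b hb g _] at h1
    rw [pmap_single, ccnj_one, one_smul] at h1
    exact h1.symm
  exact schur_scalar hirr b fun g => (cnjL_eq_iff_comm ρ g b).mp (hconj g)

end Exists

section Key

open TensorProduct

lemma trace_eq_sum_coord {M : Type} [AddCommGroup M] [Module F M]
    {ι : Type} [Fintype ι] [DecidableEq ι] (e : Basis ι F M) (y : M →ₗ[F] M) :
    LinearMap.trace F M y = ∑ i, e.coord i (y (e i)) := by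
  rw [LinearMap.trace_eq_matrix_trace F e, Matrix.trace]
  simp [LinearMap.toMatrix_apply, Matrix.diag, Basis.coord_apply]

variable {G : Type} [Group G] [Finite G]
variable {U : Type} [AddCommGroup U] [Module F U] [FiniteDimensional F U]
variable {V : Type} [AddCommGroup V] [Module F V] [FiniteDimensional F V]
variable (ρU : Representation F G U) (ρV : Representation F G V)
variable (P : Subgroup G) [Fintype (G ⧸ P)]

lemma key_lemma [IsAlgClosed F]
    (hirrT : IsIrredRep (ρU.tprod ρV))
    {a : U →ₗ[F] U} (ha : a ∈ repCommutant (ρU.comp P.subtype))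
    {b : V →ₗ[F] V} (hb : b ∈ repCommutant (ρV.comp P.subtype)) :
    ∃ lam : F, ∀ x : U →ₗ[F] U,
      pmap ρV P hb (bmap ρU P ha x)
        = (lam * LinearMap.trace F U x) • (LinearMap.id : V →ₗ[F] V) := by
  classical
  set Ta : U ⊗[F] V →ₗ[F] U ⊗[F] V :=
    ∑ c : G ⧸ P, TensorProduct.map (ccnj ρU P ha c) (ccnj ρV P hb c) with hTa
  have hsummand : ∀ (g : G) (c : G ⧸ P),
      (ρU.tprod ρV) g ∘ₗ TensorProduct.map (ccnj ρU P ha c) (ccnj ρV P hb c)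
        ∘ₗ (ρU.tprod ρV) g⁻¹
      = TensorProduct.map (ccnj ρU P ha (g • c)) (ccnj ρV P hb (g • c)) := by
    intro g c
    rw [Representation.tprod_apply, Representation.tprod_apply,
      ← TensorProduct.map_comp, ← TensorProduct.map_comp,
      ccnj_smul, ccnj_smul, cnjL_apply, cnjL_apply]
  have h1 : ∀ g : G, (ρU.tprod ρV) g ∘ₗ Ta ∘ₗ (ρU.tprod ρV) g⁻¹ = Ta := by
    intro g
    apply LinearMap.ext
    intro z
    have lhs_eq : ((ρU.tprod ρV) g ∘ₗ Ta ∘ₗ (ρU.tprod ρV) g⁻¹) z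
        = ∑ c : G ⧸ P, ((ρU.tprod ρV) g ∘ₗ
            TensorProduct.map (ccnj ρU P ha c) (ccnj ρV P hb c)
            ∘ₗ (ρU.tprod ρV) g⁻¹) z := by
      simp only [LinearMap.comp_apply, hTa, LinearMap.sum_apply, map_sum]
    rw [lhs_eq]
    simp only [hsummand]
    rw [hTa]
    rw [LinearMap.sum_apply]
    exact Fintype.sum_bijective (g • ·) (MulAction.bijective g)
      _ _ (fun c => rfl)
  have hcomm : ∀ g : G, Ta ∘ₗ (ρU.tprod ρV) g = (ρU.tprod ρV) g ∘ₗ Ta := by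
    intro g
    conv_lhs => rw [← h1 g]
    simp only [LinearMap.comp_assoc, rho_inv_comp, LinearMap.comp_id]
  obtain ⟨lam, hlam⟩ := schur_scalar hirrT Ta hcomm
  refine ⟨lam, fun x => ?_⟩
  set e := Module.finBasis F U with he
  set fi : Fin (finrank F U) → (U ⊗[F] V →ₗ[F] V) :=
    fun i => TensorProduct.lift ((LinearMap.lsmul F V).comp (e.coord i)) with hfi
  set gi : Fin (finrank F U) → (V →ₗ[F] U ⊗[F] V) :=
    fun i => TensorProduct.mk F U V (x (e i)) with hgi
  set Cx : (U ⊗[F] V →ₗ[F] U ⊗[F] V) →ₗ[F] (V →ₗ[F] V) :=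
    { toFun := fun S => ∑ i, fi i ∘ₗ S ∘ₗ gi i
      map_add' := by
        intro S S'
        simp only [LinearMap.comp_add, LinearMap.add_comp, Finset.sum_add_distrib]
      map_smul' := by
        intro r S
        simp only [LinearMap.comp_smul, LinearMap.smul_comp, Finset.smul_sum,
          RingHom.id_apply] } with hCx
  have hCmap : ∀ (a' : U →ₗ[F] U) (b' : V →ₗ[F] V),
      Cx (TensorProduct.map a' b') = (LinearMap.trace F U (a' ∘ₗ x)) • b' := by
    intro a' b'
    apply LinearMap.ext
    intro v
    simp only [hCx, LinearMap.coe_mk, AddHom.coe_mk, LinearMap.sum_apply,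
      LinearMap.comp_apply, hgi, TensorProduct.mk_apply, TensorProduct.map_tmul,
      hfi, TensorProduct.lift.tmul]
    rw [trace_eq_sum_coord e (a' ∘ₗ x), Finset.sum_smul]
    simp [LinearMap.smul_apply]
  have hpb : pmap ρV P hb (bmap ρU P ha x) = Cx Ta := by
    rw [pmap_eq_sum, hTa, map_sum]
    apply Finset.sum_congr rfl
    intro c _
    rw [bmap_apply, hCmap]
  rw [hpb, hlam, map_smul]
  have hid : Cx (LinearMap.id : U ⊗[F] V →ₗ[F] U ⊗[F] V)
      = (LinearMap.trace F U x) • (LinearMap.id : V →ₗ[F] V) := by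
    have : (LinearMap.id : U ⊗[F] V →ₗ[F] U ⊗[F] V)
        = TensorProduct.map LinearMap.id LinearMap.id := (TensorProduct.map_id).symm
    rw [this, hCmap, LinearMap.id_comp]
  rw [hid, smul_smul]

end Key

theorem statement_11
    [IsAlgClosed F]
    {G : Type} [Group G] [Finite G]
    {U : Type} [AddCommGroup U] [Module F U] [FiniteDimensional F U]
    {V : Type} [AddCommGroup V] [Module F V] [FiniteDimensional F V]
    (ρU : Representation F G U) (ρV : Representation F G V)
    (hU : IsIrredRep ρU) (hV : IsIrredRep ρV)
    (P : Subgroup G)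
    (hEndU : 2 ≤ finrank F (repCommutant (ρU.comp P.subtype)))
    (hEndV : 2 ≤ finrank F (repCommutant (ρV.comp P.subtype)))
    (hStar : StarCond (Representation.ofMulAction F G (G ⧸ P))) :
    ¬ IsIrredRep (ρU.tprod ρV) := by
  classical
  intro hIrr
  haveI : Fintype (G ⧸ P) := Fintype.ofFinite _
  rcases hStar with ⟨T, A, hTsub, hAsub, hcompl, hTrk, hTtriv, hAne, hAmin, hAnontriv⟩ |
    ⟨W₁, W₂, h1sub, h2sub, hbot1, h12, h2top, hlat, h1rk, h1triv, hqrk, hGW2, hnot⟩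
  · -- Case 1: W = T ⊕ A
    obtain ⟨a, ha, x₀, hx₀⟩ := exists_bmap_not_mem P hU hEndU T hTtriv
    obtain ⟨b, hb, g₁, w₁, hbne⟩ := exists_pmap_not_invariant P hV hEndV
    obtain ⟨lam, hkey⟩ := key_lemma ρU ρV P hIrr ha hb
    set d := (Representation.ofMulAction F G (G ⧸ P)) g₁ w₁ - w₁ with hdd
    have hd0 : pmap ρV P hb d ≠ 0 := by
      rw [hdd, map_sub, sub_ne_zero]; exact hbne
    have hdA : d ∈ A := by
      have hmem : w₁ ∈ T ⊔ A := by rw [hcompl.sup_eq_top]; exact Submodule.mem_top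
      rw [Submodule.mem_sup] at hmem
      obtain ⟨t, ht, α, hα, hw⟩ := hmem
      have : d = (Representation.ofMulAction F G (G ⧸ P)) g₁ α - α := by
        rw [hdd, ← hw, map_add, hTtriv g₁ t ht]; abel
      rw [this]
      exact Submodule.sub_mem A (hAsub g₁ α hα) hα
    -- projection onto A along T
    set π0 := A.linearProjOfIsCompl T hcompl.symm with hπ0
    set πc : MonoidAlgebra F (G ⧸ P) →ₗ[F] MonoidAlgebra F (G ⧸ P) := A.subtype ∘ₗ π0 with hπc
    have hπcA : ∀ w, πc w ∈ A := fun w => (π0 w).2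
    have hπc_onT : ∀ w ∈ T, πc w = 0 := by
      intro w hw
      have h' : π0 w = 0 :=
        Submodule.linearProjOfIsCompl_apply_right hcompl.symm ⟨w, hw⟩
      simp [hπc, h']
    have hπc_onA : ∀ w ∈ A, πc w = w := by
      intro w hw
      have h' : π0 w = ⟨w, hw⟩ :=
        Submodule.linearProjOfIsCompl_apply_left hcompl.symm ⟨w, hw⟩
      simp [hπc, h']
    have hsubπ : ∀ w, w - πc w ∈ T := by
      intro w
      have h0 : π0 (w - πc w) = 0 := by
        rw [map_sub]
        have h1 : π0 (πc w) = π0 w := by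
          rw [hπc]
          simp only [LinearMap.comp_apply]
          exact Submodule.linearProjOfIsCompl_apply_left _ _
        rw [h1, sub_self]
      have hk : w - πc w ∈ LinearMap.ker π0 := LinearMap.mem_ker.mpr h0
      rw [hπ0] at hk
      exact (Submodule.linearProjOfIsCompl_ker hcompl.symm).le hk
    have hπequi : ∀ (g : G) w, πc ((Representation.ofMulAction F G (G ⧸ P)) g w) = (Representation.ofMulAction F G (G ⧸ P)) g (πc w) := by
      intro g w
      have hw1 : (Representation.ofMulAction F G (G ⧸ P)) g w = (Representation.ofMulAction F G (G ⧸ P)) g (w - πc w) + (Representation.ofMulAction F G (G ⧸ P)) g (πc w) := by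
        rw [← map_add]; congr 1; abel
      rw [hw1, map_add, hπc_onT _ (hTsub g _ (hsubπ w)),
        hπc_onA _ (hAsub g _ (hπcA w)), zero_add]
    set S := LinearMap.range (πc ∘ₗ bmap ρU P ha) with hS
    have hSle : S ≤ A := by rintro _ ⟨x, rfl⟩; exact hπcA _
    have hSsub : IsSubrep (Representation.ofMulAction F G (G ⧸ P)) S := by
      rintro g _ ⟨x, rfl⟩
      refine ⟨cnjL ρU g x, ?_⟩
      show πc (bmap ρU P ha (cnjL ρU g x))
        = Representation.ofMulAction F G (G ⧸ P) g ((πc ∘ₗ bmap ρU P ha) x)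
      rw [bmap_equivariant, hπequi]
      rfl
    have hSne : S ≠ ⊥ := by
      intro h
      apply hx₀
      have hmem : πc (bmap ρU P ha x₀) ∈ S := ⟨x₀, rfl⟩
      rw [h, Submodule.mem_bot] at hmem
      have := hsubπ (bmap ρU P ha x₀)
      rwa [hmem, sub_zero] at this
    have hSA : S = A := (hAmin S hSle hSsub).resolve_left hSne
    have hTscalar : ∀ w ∈ T, ∃ γ : F, pmap ρV P hb w = γ • LinearMap.id := by
      intro w hw
      refine schur_scalar hV _ (fun g => (cnjL_eq_iff_comm ρV g _).mp ?_)
      rw [← pmap_equivariant, hTtriv g w hw]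
    have hAscalar : ∀ w ∈ A, ∃ γ : F, pmap ρV P hb w = γ • LinearMap.id := by
      intro w hw
      rw [← hSA] at hw
      obtain ⟨x, hx⟩ := hw
      rw [LinearMap.comp_apply] at hx
      have hT' : bmap ρU P ha x - w ∈ T := by rw [← hx]; exact hsubπ _
      obtain ⟨γ', hγ'⟩ := hTscalar _ hT'
      refine ⟨lam * LinearMap.trace F U x - γ', ?_⟩
      have hwe : w = bmap ρU P ha x - (bmap ρU P ha x - w) := by abel
      rw [hwe, map_sub, hkey, hγ', sub_smul]
    set K := LinearMap.ker (pmap ρV P hb) with hK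
    have hKsub : IsSubrep (Representation.ofMulAction F G (G ⧸ P)) K := by
      intro g v hv
      rw [LinearMap.mem_ker] at hv ⊢
      rw [pmap_equivariant, hv, map_zero]
    have hinfsub : IsSubrep (Representation.ofMulAction F G (G ⧸ P)) (A ⊓ K) := by
      intro g v hv
      rw [Submodule.mem_inf] at hv ⊢
      exact ⟨hAsub g v hv.1, hKsub g v hv.2⟩
    have hKbot : A ⊓ K = ⊥ := by
      rcases hAmin _ inf_le_left hinfsub with h | h
      · exact h
      · exfalso
        apply hd0
        have : d ∈ A ⊓ K := h.symm ▸ hdA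
        exact LinearMap.mem_ker.mp this.2
    apply hAnontriv
    intro g α hα
    obtain ⟨γ, hγ⟩ := hAscalar α hα
    have hmem : (Representation.ofMulAction F G (G ⧸ P)) g α - α ∈ A ⊓ K := by
      rw [Submodule.mem_inf]
      constructor
      · exact Submodule.sub_mem A (hAsub g α hα) hα
      · rw [LinearMap.mem_ker, map_sub, pmap_equivariant, hγ, map_smul, cnjL_id,
          sub_self]
    rw [hKbot, Submodule.mem_bot] at hmem
    exact sub_eq_zero.mp hmem
  · -- Case 2: uniserial
    obtain ⟨a, ha, x₀, hx₀⟩ := exists_bmap_not_mem P hU hEndU W₁ h1triv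
    obtain ⟨b, hb, g₁, w₁v, hbne⟩ := exists_pmap_not_invariant P hV hEndV
    obtain ⟨lam, hkey⟩ := key_lemma ρU ρV P hIrr ha hb
    set d := (Representation.ofMulAction F G (G ⧸ P)) g₁ w₁v - w₁v with hdd
    have hd0 : pmap ρV P hb d ≠ 0 := by
      rw [hdd, map_sub, sub_ne_zero]; exact hbne
    have hdW2 : d ∈ W₂ := hGW2 g₁ w₁v
    set S := LinearMap.range (bmap ρU P ha) with hS
    have hSsub : IsSubrep (Representation.ofMulAction F G (G ⧸ P)) S := by
      rintro g _ ⟨x, rfl⟩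
      exact ⟨cnjL ρU g x, bmap_equivariant ρU P ha g x⟩
    have hW2S : W₂ ≤ S := by
      have hx₀S : bmap ρU P ha x₀ ∈ S := ⟨x₀, rfl⟩
      rcases hlat S hSsub with h | h | h | h
      · exfalso; apply hx₀; rw [h, Submodule.mem_bot] at hx₀S
        rw [hx₀S]; exact Submodule.zero_mem W₁
      · exfalso; apply hx₀; rw [h] at hx₀S; exact hx₀S
      · exact h ▸ le_refl _
      · rw [h]; exact le_top
    set K := LinearMap.ker (pmap ρV P hb) with hK
    have hKsub : IsSubrep (Representation.ofMulAction F G (G ⧸ P)) K := by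
      intro g v hv
      rw [LinearMap.mem_ker] at hv ⊢
      rw [pmap_equivariant, hv, map_zero]
    have hKW1 : K ≤ W₁ := by
      rcases hlat K hKsub with h | h | h | h
      · rw [h]; exact bot_le
      · exact h ▸ le_refl _
      · exfalso; apply hd0
        exact LinearMap.mem_ker.mp (show d ∈ K by rw [h]; exact hdW2)
      · exfalso; apply hd0
        exact LinearMap.mem_ker.mp (show d ∈ K by rw [h]; exact Submodule.mem_top)
    have hW2scalar : ∀ w ∈ W₂, ∃ γ : F, pmap ρV P hb w = γ • LinearMap.id := by
      intro w hw
      obtain ⟨x, hx⟩ := hW2S hw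
      exact ⟨lam * LinearMap.trace F U x, by rw [← hx, hkey]⟩
    apply hnot
    intro g v hv
    obtain ⟨γ, hγ⟩ := hW2scalar v hv
    apply hKW1
    rw [LinearMap.mem_ker, map_sub, pmap_equivariant, hγ, map_smul, cnjL_id, sub_self]
end Coset
end

section
/- Let F be an algebraically closed field of characteristic ℓ ≥ 0, G a finite group, and S ⊴ G a normal subgroup with G/S cyclic. Let A be the unique subgroup with S ≤ A ≤ G such that [A : S] equals the ℓ-part of [G : S] (so A = S if ℓ = 0). Suppose U is a simple F[S]-module which occurs as a composition factor of both Res^G_S V₁ and Res^G_S V₂, where V₁ and V₂ are finite-dimensional simple F[G]-modules. Then V₂ ≅ V₁ ⊗ F_λ for some group homomorphism λ : G → F^× with A ≤ ker λ. -/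
open Module

section Defs

variable {F : Type} [Field F] {G : Type} [Group G] {V : Type} [AddCommGroup V] [Module F V]

/-- `CompLengthIs ρ T k`: the `G`-invariant subspace `T` of `V` has composition length `k`
as a module over the group algebra `F[G]`: there is a chain `⊥ = c₀ < c₁ < ⋯ < c_k = T` of
invariant subspaces with no invariant subspace strictly between consecutive terms. -/
def CompLengthIs (ρ : Representation F G V) (T : Submodule F V) (k : ℕ) : Prop :=
  ∃ c : Fin (k + 1) → Submodule F V,
    c 0 = ⊥ ∧ c (Fin.last k) = T ∧ (∀ i, IsSubrep ρ (c i)) ∧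
    (∀ i : Fin k, c i.castSucc < c i.succ) ∧
    (∀ i : Fin k, ∀ q : Submodule F V, IsSubrep ρ q →
      c i.castSucc ≤ q → q ≤ c i.succ → q = c i.castSucc ∨ q = c i.succ)

end Defs

section Helpers
variable {F : Type} [Field F] {G : Type} [Group G] {V : Type} [AddCommGroup V] [Module F V]
lemma isSubrep_inf {ρ : Representation F G V} {p q : Submodule F V}
    (hp : IsSubrep ρ p) (hq : IsSubrep ρ q) : IsSubrep ρ (p ⊓ q) :=
  fun g v hv => ⟨hp g v hv.1, hq g v hv.2⟩

def IsSimpleSub (ρ : Representation F G V) (W : Submodule F V) : Prop :=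
  IsSubrep ρ W ∧ W ≠ ⊥ ∧ ∀ p : Submodule F V, IsSubrep ρ p → p < W → p = ⊥
lemma exists_simple_aux [FiniteDimensional F V] (ρ : Representation F G V) :
    ∀ (n : ℕ) (T : Submodule F V), finrank F T = n → IsSubrep ρ T → T ≠ ⊥ →
      ∃ W, IsSimpleSub ρ W ∧ W ≤ T := by
  intro n
  induction n using Nat.strong_induction_on with
  | _ n ih =>
    intro T hn hT hTne
    by_cases hs : ∀ p : Submodule F V, IsSubrep ρ p → p < T → p = ⊥
    · exact ⟨T, ⟨hT, hTne, hs⟩, le_rfl⟩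
    · push_neg at hs
      obtain ⟨p, hp, hpT, hpne⟩ := hs
      obtain ⟨W, hW, hWp⟩ :=
        ih (finrank F p) (hn ▸ Submodule.finrank_lt_finrank_of_lt hpT) p rfl hp hpne
      exact ⟨W, hW, hWp.trans hpT.le⟩

lemma exists_simple [FiniteDimensional F V] (ρ : Representation F G V)
    (T : Submodule F V) (hT : IsSubrep ρ T) (hTne : T ≠ ⊥) :
    ∃ W, IsSimpleSub ρ W ∧ W ≤ T :=
  exists_simple_aux ρ (finrank F T) T rfl hT hTne
lemma rho_inv_apply (ρ : Representation F G V) (g : G) (v : V) :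
    ρ g⁻¹ (ρ g v) = v := by
  rw [← Module.End.mul_apply, ← map_mul, inv_mul_cancel, map_one, Module.End.one_apply]
lemma rho_apply_inv (ρ : Representation F G V) (g : G) (v : V) :
    ρ g (ρ g⁻¹ v) = v := by
  rw [← Module.End.mul_apply, ← map_mul, mul_inv_cancel, map_one, Module.End.one_apply]

def repEquiv (ρ : Representation F G V) (g : G) : V ≃ₗ[F] V :=
  LinearEquiv.ofLinear (ρ g) (ρ g⁻¹)
    (by ext v; exact rho_apply_inv ρ g v) (by ext v; exact rho_inv_apply ρ g v)

lemma repEquiv_apply (ρ : Representation F G V) (g : G) (v : V) :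
    repEquiv ρ g v = ρ g v := rfl

variable (S : Subgroup G) [S.Normal]

lemma conj_formula (ρ : Representation F G V) (g : G) (s : G) (w : V) :
    ρ s (ρ g w) = ρ g (ρ (g⁻¹ * s * g) w) := by
  rw [← Module.End.mul_apply, ← Module.End.mul_apply, ← map_mul, ← map_mul]
  congr 1
  group

lemma map_simple (ρ : Representation F G V) (g : G) {W : Submodule F V}
    (hW : IsSimpleSub (ρ.comp S.subtype) W) :
    IsSimpleSub (ρ.comp S.subtype) (W.map (ρ g)) := by
  let e : Submodule F V ≃o Submodule F V := Submodule.orderIsoMapComap (repEquiv ρ g)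
  have hmape : ∀ (q : Submodule F V), q.map (ρ g) = e q := fun q => rfl
  have hcomape : ∀ (q : Submodule F V) (v : V), v ∈ e.symm q ↔ ρ g v ∈ q := fun q v => Iff.rfl
  refine ⟨?_, ?_, ?_⟩
  · rintro s v ⟨w, hw, rfl⟩
    have hmem : g⁻¹ * ↑s * g ∈ S := by
      have := (‹S.Normal›).conj_mem (↑s) s.2 g⁻¹
      simpa using this
    show ρ (↑s) (ρ g w) ∈ W.map (ρ g)
    rw [conj_formula]
    exact Submodule.mem_map_of_mem (hW.1 ⟨_, hmem⟩ w hw)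
  · intro hbot
    apply hW.2.1
    rw [hmape, ← map_bot e] at hbot
    exact e.injective hbot
  · intro p hp hplt
    have hinv : IsSubrep (ρ.comp S.subtype) (e.symm p) := by
      intro s v hv
      have hv' : ρ g v ∈ p := (hcomape p v).mp hv
      rw [hcomape]
      show ρ g (ρ (↑s) v) ∈ p
      have hmem : g * ↑s * g⁻¹ ∈ S := (‹S.Normal›).conj_mem (↑s) s.2 g
      have : ρ g (ρ (↑s) v) = ρ (g * ↑s * g⁻¹) (ρ g v) := by
        rw [conj_formula ρ g (g * ↑s * g⁻¹) v]
        congr 2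
        group
      rw [this]
      exact hp ⟨_, hmem⟩ _ hv'
    have hlt : e.symm p < W := by
      have := e.symm.strictMono hplt
      rwa [hmape W, e.symm_apply_apply] at this
    have := hW.2.2 _ hinv hlt
    have h2 : p = e ⊥ := by rw [← this, e.apply_symm_apply]
    rw [h2, map_bot]

lemma clifford (ρ : Representation F G V) [FiniteDimensional F V] (h : IsIrredRep ρ) :
    sSup {W | IsSimpleSub (ρ.comp S.subtype) W} = ⊤ := by
  set 𝒮 := {W | IsSimpleSub (ρ.comp S.subtype) W} with h𝒮
  obtain ⟨W₀, hW₀, -⟩ := exists_simple (ρ.comp S.subtype) ⊤ (fun _ _ _ => trivial) (Ne.symm h.1)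
  have hinv : IsSubrep ρ (sSup 𝒮) := by
    intro g v hv
    rw [sSup_eq_iSup'] at hv ⊢
    refine Submodule.iSup_induction (motive := fun x => ρ g x ∈ ⨆ W : 𝒮, (W : Submodule F V))
      _ hv ?_ ?_ ?_
    · intro W x hx
      have h1 : ρ g x ∈ (W : Submodule F V).map (ρ g) := Submodule.mem_map_of_mem hx
      have h2 : (W : Submodule F V).map (ρ g) ∈ 𝒮 := map_simple S ρ g W.2
      have h3 : (W : Submodule F V).map (ρ g) ≤ ⨆ W : 𝒮, (W : Submodule F V) :=
        le_iSup (fun W : 𝒮 => (W : Submodule F V)) ⟨_, h2⟩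
      exact h3 h1
    · simp
    · intro x y hx hy
      rw [map_add]
      exact Submodule.add_mem _ hx hy
  rcases h.2 _ hinv with hbot | htop
  · exact absurd (le_bot_iff.mp (hbot ▸ le_sSup hW₀)) hW₀.2.1
  · exact htop

lemma exists_compl {X : Type} [Group X] (τ : Representation F X V) [FiniteDimensional F V]
    (hss : sSup {W | IsSimpleSub τ W} = ⊤)
    (T : Submodule F V) (hT : IsSubrep τ T) :
    ∃ C : Submodule F V, IsSubrep τ C ∧ IsCompl T C := by
  set s : Set ℕ := {n | ∃ C : Submodule F V, IsSubrep τ C ∧ T ⊓ C = ⊥ ∧ finrank F C = n} with hs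
  have hne : s.Nonempty := ⟨0, ⊥, (fun g v hv => by simp_all), inf_bot_eq T, finrank_bot F V⟩
  have hbdd : BddAbove s := by
    refine ⟨finrank F V, ?_⟩
    rintro n ⟨C, -, -, rfl⟩
    exact Submodule.finrank_le C
  obtain ⟨C, hC, hdisj, hrank⟩ := Nat.sSup_mem hne hbdd
  refine ⟨C, hC, ?_⟩
  have hsup : ∀ W ∈ {W | IsSimpleSub τ W}, W ≤ T ⊔ C := by
    intro W hW
    by_contra hWTC
    have hWinf : W ⊓ (T ⊔ C) = ⊥ := by
      refine hW.2.2 _ (isSubrep_inf hW.1 (isSubrep_sup hT hC)) ?_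
      exact lt_of_le_of_ne inf_le_left (fun hEq => hWTC (hEq ▸ inf_le_right))
    have hdisj' : T ⊓ (C ⊔ W) = ⊥ := by
      rw [eq_bot_iff]
      rintro x ⟨hxT, hxCW⟩
      obtain ⟨c, hc, w, hw, rfl⟩ := Submodule.mem_sup.mp hxCW
      have hwmem : w ∈ W ⊓ (T ⊔ C) := by
        refine ⟨hw, ?_⟩
        have : w = (c + w) - c := by abel
        rw [this]
        exact Submodule.sub_mem _ (Submodule.mem_sup_left hxT) (Submodule.mem_sup_right hc)
      rw [hWinf] at hwmem
      simp only [Submodule.mem_bot] at hwmem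
      subst hwmem
      have : c + 0 ∈ T ⊓ C := ⟨hxT, by simpa using hc⟩
      rw [hdisj] at this
      simpa using this
    have hlt : C < C ⊔ W := left_lt_sup.mpr (fun hWC => hWTC (hWC.trans le_sup_right))
    have hmem : finrank F (C ⊔ W : Submodule F V) ∈ s :=
      ⟨C ⊔ W, isSubrep_sup hC hW.1, hdisj', rfl⟩
    have := le_csSup hbdd hmem
    rw [← hrank] at this
    exact absurd (Submodule.finrank_lt_finrank_of_lt hlt) (not_lt.mpr this)
  have hcodis : T ⊔ C = ⊤ := by
    rw [← top_le_iff, ← hss]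
    exact sSup_le hsup
  exact ⟨disjoint_iff.mpr hdisj, codisjoint_iff.mpr hcodis⟩


lemma exists_emb_proj {U : Type} [AddCommGroup U] [Module F U]
    (ρ : Representation F G V) [FiniteDimensional F V]
    (h : IsIrredRep ρ) (σ : Representation F ↥S U)
    (hcf : IsCompFactor σ (ρ.comp S.subtype)) :
    ∃ (ι : U →ₗ[F] V) (π : V →ₗ[F] U),
      Function.Injective ι ∧ Function.Surjective π ∧
      (∀ (s : ↥S) (u : U), ι (σ s u) = ρ (↑s) (ι u)) ∧
      (∀ (s : ↥S) (v : V), π (ρ (↑s) v) = σ s (π v)) := by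
  obtain ⟨p, q, hp, hq, hpq, f, hfsurj, hfker, hfequiv⟩ := hcf
  have hss := clifford S ρ h
  obtain ⟨C, hC, hCcompl⟩ := exists_compl (ρ.comp S.subtype) hss p hp
  set r : Submodule F V := C ⊓ q with hrdef
  have hrq : r ≤ q := inf_le_right
  have hr : IsSubrep (ρ.comp S.subtype) r := isSubrep_inf hC hq
  let g₀ : ↥r →ₗ[F] U := f.comp (Submodule.inclusion hrq)
  have hg₀ : ∀ x : ↥r, g₀ x = f ⟨(x : V), hrq x.2⟩ := fun x => rfl
  have ginj : Function.Injective g₀ := by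
    rw [← LinearMap.ker_eq_bot]
    rw [LinearMap.ker_eq_bot']
    intro x hx
    rw [hg₀] at hx
    have hxp : (x : V) ∈ p := (hfker _).mp hx
    have : (x : V) ∈ p ⊓ C := ⟨hxp, x.2.1⟩
    rw [hCcompl.inf_eq_bot] at this
    exact Subtype.ext (by simpa using this)
  have hqdecomp : p ⊔ r = q := by
    have h1 : (p ⊔ C) ⊓ q = p ⊔ (C ⊓ q) := sup_inf_assoc_of_le C hpq
    rw [hCcompl.sup_eq_top] at h1
    rw [hrdef, ← h1, top_inf_eq]
  have gsurj : Function.Surjective g₀ := by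
    intro u
    obtain ⟨x, hfx⟩ := hfsurj u
    have hx : (x : V) ∈ p ⊔ r := by rw [hqdecomp]; exact x.2
    obtain ⟨a, ha, b, hb, hab⟩ := Submodule.mem_sup.mp hx
    refine ⟨⟨b, hb⟩, ?_⟩
    have hxq : x = ⟨a, hpq ha⟩ + ⟨b, hrq hb⟩ := Subtype.ext hab.symm
    have hfa : f ⟨a, hpq ha⟩ = 0 := (hfker _).mpr ha
    rw [hg₀]
    rw [hxq, map_add, hfa, zero_add] at hfx
    exact hfx
  let E : ↥r ≃ₗ[F] U := LinearEquiv.ofBijective g₀ ⟨ginj, gsurj⟩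
  have hEapp : ∀ x : ↥r, E x = g₀ x := fun x => rfl
  have hgequiv : ∀ (s : ↥S) (x : ↥r) (hmem : ρ (↑s) (x : V) ∈ r),
      E ⟨ρ (↑s) (x : V), hmem⟩ = σ s (E x) := by
    intro s x hmem
    rw [hEapp, hEapp, hg₀, hg₀]
    exact hfequiv s ⟨(x : V), hrq x.2⟩
  obtain ⟨D, hD, hDcompl⟩ := exists_compl (ρ.comp S.subtype) hss r hr
  set π₀ : V →ₗ[F] ↥r := r.linearProjOfIsCompl D hDcompl with hπ₀
  refine ⟨r.subtype.comp (E.symm : U →ₗ[F] ↥r), E.toLinearMap.comp π₀, ?_, ?_, ?_, ?_⟩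
  · exact Subtype.coe_injective.comp E.symm.injective
  · intro u
    refine ⟨((E.symm u : ↥r) : V), ?_⟩
    simp only [LinearMap.comp_apply]
    have h1 : π₀ ((E.symm u : ↥r) : V) = E.symm u :=
      Submodule.linearProjOfIsCompl_apply_left hDcompl (E.symm u)
    rw [h1]
    exact E.apply_symm_apply u
  · intro s u
    have hmem : ρ (↑s) ((E.symm u : ↥r) : V) ∈ r := hr s _ (E.symm u).2
    have h1 : E ⟨ρ (↑s) ((E.symm u : ↥r) : V), hmem⟩ = σ s u := by
      rw [hgequiv s (E.symm u) hmem, E.apply_symm_apply]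
    have h2 : E.symm (σ s u) = ⟨ρ (↑s) ((E.symm u : ↥r) : V), hmem⟩ := by
      rw [← h1, E.symm_apply_apply]
    simp only [LinearMap.comp_apply, Submodule.subtype_apply, LinearEquiv.coe_coe]
    rw [h2]
  · intro s v
    have hv : v ∈ r ⊔ D := by rw [hDcompl.sup_eq_top]; trivial
    obtain ⟨a, ha, b, hb, rfl⟩ := Submodule.mem_sup.mp hv
    have hra : ρ (↑s) a ∈ r := hr s a ha
    have hdb : ρ (↑s) b ∈ D := hD s b hb
    have hπa : π₀ a = ⟨a, ha⟩ := Submodule.linearProjOfIsCompl_apply_left hDcompl ⟨a, ha⟩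
    have hπb : π₀ b = 0 := Submodule.linearProjOfIsCompl_apply_right hDcompl ⟨b, hb⟩
    have hπa' : π₀ (ρ (↑s) a) = ⟨ρ (↑s) a, hra⟩ :=
      Submodule.linearProjOfIsCompl_apply_left hDcompl ⟨ρ (↑s) a, hra⟩
    have hπb' : π₀ (ρ (↑s) b) = 0 :=
      Submodule.linearProjOfIsCompl_apply_right hDcompl ⟨ρ (↑s) b, hdb⟩
    have hπab : π₀ (a + b) = ⟨a, ha⟩ := by rw [map_add, hπa, hπb, add_zero]
    have hπab' : π₀ (ρ (↑s) (a + b)) = ⟨ρ (↑s) a, hra⟩ := by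
      rw [map_add, map_add, hπa', hπb', add_zero]
    simp only [LinearMap.comp_apply]
    rw [hπab, hπab']
    exact hgequiv s ⟨a, ha⟩ hra

end Helpers

section Conj
variable {F : Type} [Field F] {G : Type} [Group G]
  {V₁ : Type} [AddCommGroup V₁] [Module F V₁]
  {V₂ : Type} [AddCommGroup V₂] [Module F V₂]
  (ρ₁ : Representation F G V₁) (ρ₂ : Representation F G V₂)

def conjMap (g : G) : (V₁ →ₗ[F] V₂) →ₗ[F] (V₁ →ₗ[F] V₂) where
  toFun ψ := (ρ₂ g) ∘ₗ ψ ∘ₗ (ρ₁ g⁻¹)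
  map_add' ψ χ := by ext v; simp
  map_smul' a ψ := by ext v; simp

lemma conjMap_apply (g : G) (ψ : V₁ →ₗ[F] V₂) (v : V₁) :
    conjMap ρ₁ ρ₂ g ψ v = ρ₂ g (ψ (ρ₁ g⁻¹ v)) := rfl

lemma conjMap_conjMap (g h : G) (ψ : V₁ →ₗ[F] V₂) :
    conjMap ρ₁ ρ₂ g (conjMap ρ₁ ρ₂ h ψ) = conjMap ρ₁ ρ₂ (g * h) ψ := by
  ext v
  simp only [conjMap_apply]
  rw [mul_inv_rev, map_mul ρ₁, map_mul ρ₂, Module.End.mul_apply, Module.End.mul_apply]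

lemma conjMap_one (ψ : V₁ →ₗ[F] V₂) : conjMap ρ₁ ρ₂ 1 ψ = ψ := by
  ext v
  simp only [conjMap_apply, inv_one, map_one, Module.End.one_apply]

lemma conj_formula' {V : Type} [AddCommGroup V] [Module F V]
    (ρ : Representation F G V) (g s : G) (w : V) :
    ρ g (ρ s w) = ρ (g * s * g⁻¹) (ρ g w) := by
  rw [← Module.End.mul_apply, ← map_mul, ← Module.End.mul_apply, ← map_mul]
  congr 1
  group

end Conj



theorem statement_16
    {F : Type} [Field F] [IsAlgClosed F]
    {G : Type} [Group G] [Finite G]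
    (S : Subgroup G) [S.Normal] (hcyc : IsCyclic (G ⧸ S))
    -- `A` is the subgroup with `S ≤ A ≤ G` and `[A : S]` equal to the `ℓ`-part of `[G : S]`
    (A : Subgroup G) (hSA : S ≤ A)
    (hA : S.relIndex A = ringChar F ^ ((Nat.factorization S.index) (ringChar F)))
    {V₁ : Type} [AddCommGroup V₁] [Module F V₁] [FiniteDimensional F V₁]
    {V₂ : Type} [AddCommGroup V₂] [Module F V₂] [FiniteDimensional F V₂]
    (ρ₁ : Representation F G V₁) (ρ₂ : Representation F G V₂)
    (h₁ : IsIrredRep ρ₁) (h₂ : IsIrredRep ρ₂)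
    -- `U` is a simple `F[S]`-module occurring as a composition factor of both restrictions
    {U : Type} [AddCommGroup U] [Module F U] [FiniteDimensional F U]
    (σ : Representation F (↥S) U) (hU : IsIrredRep σ)
    (hcf₁ : IsCompFactor σ (ρ₁.comp S.subtype))
    (hcf₂ : IsCompFactor σ (ρ₂.comp S.subtype)) :
    ∃ l : G →* Fˣ, A ≤ l.ker ∧
      ∃ e : V₁ ≃ₗ[F] V₂, ∀ (g : G) (v : V₁), e ((l g : F) • ρ₁ g v) = ρ₂ g (e v) := by
  classical
  -- U is nontrivial
  have hUnt : ∃ u : U, u ≠ 0 := by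
    by_contra hc
    push_neg at hc
    exact hU.1 (by ext u; simpa using hc u)
  -- equivariant embedding and projection for both factors
  obtain ⟨ι₁, π₁, hι₁inj, hπ₁surj, hι₁eq, hπ₁eq⟩ := exists_emb_proj S ρ₁ h₁ σ hcf₁
  obtain ⟨ι₂, π₂, hι₂inj, hπ₂surj, hι₂eq, hπ₂eq⟩ := exists_emb_proj S ρ₂ h₂ σ hcf₂
  set φ : V₁ →ₗ[F] V₂ := ι₂ ∘ₗ π₁ with hφ
  have hφS : ∀ (s : ↥S) (v : V₁), φ (ρ₁ (↑s) v) = ρ₂ (↑s) (φ v) := by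
    intro s v
    simp only [hφ, LinearMap.comp_apply, hπ₁eq, hι₂eq]
  have hφne : φ ≠ 0 := by
    obtain ⟨u, hu⟩ := hUnt
    obtain ⟨v, hv⟩ := hπ₁surj u
    intro h0
    apply hu
    have h1 : φ v = 0 := by rw [h0]; rfl
    rw [hφ] at h1
    simp only [LinearMap.comp_apply, hv] at h1
    exact hι₂inj (by simpa using h1)
  -- the space of S-equivariant maps
  set H : Submodule F (V₁ →ₗ[F] V₂) :=
    { carrier := {ψ | ∀ (s : ↥S) (v : V₁), ψ (ρ₁ (↑s) v) = ρ₂ (↑s) (ψ v)}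
      add_mem' := by intro a b ha hb s v; simp [ha s v, hb s v]
      zero_mem' := by intro s v; simp
      smul_mem' := by intro a ψ hψ s v; simp [hψ s v] } with hHdef
  have hφH : φ ∈ H := hφS
  -- G acts on H by conjugation
  have hHinv : ∀ (g : G), ∀ ψ ∈ H, conjMap ρ₁ ρ₂ g ψ ∈ H := by
    intro g ψ hψ s v
    have hψ' : ∀ (t : G) (ht : t ∈ S) (w : V₁), ψ (ρ₁ t w) = ρ₂ t (ψ w) :=
      fun t ht w => hψ ⟨t, ht⟩ w
    have ht : g⁻¹ * ↑s * g⁻¹⁻¹ ∈ S := by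
      rw [inv_inv]
      simpa using (inferInstance : S.Normal).conj_mem (↑s) s.2 g⁻¹
    rw [conjMap_apply, conjMap_apply, conj_formula' ρ₁ g⁻¹ (↑s) v,
      hψ' _ ht (ρ₁ g⁻¹ v), conj_formula' ρ₂ g _ (ψ (ρ₁ g⁻¹ v))]
    have heq : g * (g⁻¹ * ↑s * g⁻¹⁻¹) * g⁻¹ = (↑s : G) := by group
    rw [heq]
  haveI : Nontrivial ↥H :=
    ⟨⟨⟨φ, hφH⟩, 0, fun hEq => hφne (by simpa using congrArg Subtype.val hEq)⟩⟩
  -- pick a generator of G/S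
  obtain ⟨xq, hxq⟩ := hcyc.exists_generator
  obtain ⟨c, hc⟩ := Quot.exists_rep xq
  have hgen : ∀ g : G, ∃ k : ℤ, (c ^ k)⁻¹ * g ∈ S := by
    intro g
    obtain ⟨k, hk⟩ := Subgroup.mem_zpowers_iff.mp (hxq ((g : G) : G ⧸ S))
    refine ⟨k, ?_⟩
    have hck : ((c ^ k : G) : G ⧸ S) = ((g : G) : G ⧸ S) := by
      rw [← hk, ← hc]
      rfl
    exact (QuotientGroup.eq).mp hck
  -- eigenvector for the action of c
  set E : Module.End F ↥H := (conjMap ρ₁ ρ₂ c).restrict (hHinv c) with hE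
  obtain ⟨μ, hμ⟩ := Module.End.exists_eigenvalue E
  obtain ⟨ψh, hψh⟩ := hμ.exists_hasEigenvector
  set ψ : V₁ →ₗ[F] V₂ := (ψh : V₁ →ₗ[F] V₂) with hψdef
  have hψH : ψ ∈ H := ψh.2
  have hψ' : ∀ (t : G) (ht : t ∈ S) (w : V₁), ψ (ρ₁ t w) = ρ₂ t (ψ w) :=
    fun t ht w => hψH ⟨t, ht⟩ w
  have hψne : ψ ≠ 0 := fun h0 => hψh.2 (Subtype.ext h0)
  have hconjc : conjMap ρ₁ ρ₂ c ψ = μ • ψ := by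
    have h1 := hψh.apply_eq_smul
    have h2 := congrArg Subtype.val h1
    rw [hE] at h2
    simpa [LinearMap.restrict_coe_apply] using h2
  have hμne : μ ≠ 0 := by
    intro h0
    apply hψne
    have h1 : conjMap ρ₁ ρ₂ c⁻¹ (conjMap ρ₁ ρ₂ c ψ) = ψ := by
      rw [conjMap_conjMap, inv_mul_cancel, conjMap_one]
    rw [hconjc, h0, zero_smul, map_zero] at h1
    exact h1.symm
  -- uniqueness of eigen-scalars
  have huniq : ∀ (w w' : Fˣ), (w : F) • ψ = (w' : F) • ψ → w = w' := by
    intro w w' hww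
    have h1 : ((w : F) - (w' : F)) • ψ = 0 := by rw [sub_smul, hww, sub_self]
    rcases smul_eq_zero.mp h1 with h | h
    · exact Units.ext (sub_eq_zero.mp h)
    · exact absurd h hψne
  -- all of G acts by scalars on ψ
  have hSfix : ∀ (t : G), t ∈ S → conjMap ρ₁ ρ₂ t ψ = ψ := by
    intro t ht
    ext v
    rw [conjMap_apply]
    have := hψ' t ht (ρ₁ t⁻¹ v)
    rw [rho_apply_inv] at this
    rw [← this]
  set Kc : Subgroup G :=
    { carrier := {g | ∃ w : Fˣ, conjMap ρ₁ ρ₂ g ψ = (w : F) • ψ}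
      one_mem' := ⟨1, by rw [conjMap_one, Units.val_one, one_smul]⟩
      mul_mem' := by
        rintro a b ⟨wa, hwa⟩ ⟨wb, hwb⟩
        refine ⟨wa * wb, ?_⟩
        rw [← conjMap_conjMap, hwb, map_smul, hwa, smul_smul]
        norm_cast
        rw [mul_comm]
      inv_mem' := by
        rintro a ⟨w, hw⟩
        refine ⟨w⁻¹, ?_⟩
        have h1 : conjMap ρ₁ ρ₂ a⁻¹ (conjMap ρ₁ ρ₂ a ψ) = ψ := by
          rw [conjMap_conjMap, inv_mul_cancel, conjMap_one]
        rw [hw, map_smul] at h1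
        have h2 : ((w⁻¹ : Fˣ) : F) • ((w : F) • conjMap ρ₁ ρ₂ a⁻¹ ψ) = ((w⁻¹ : Fˣ) : F) • ψ := by
          rw [h1]
        rw [smul_smul, ← Units.val_mul, inv_mul_cancel, Units.val_one, one_smul] at h2
        exact h2 } with hKc
  have hcK : c ∈ Kc := ⟨Units.mk0 μ hμne, by rw [hconjc]; rfl⟩
  have hKtop : ∀ g : G, ∃ w : Fˣ, conjMap ρ₁ ρ₂ g ψ = (w : F) • ψ := by
    intro g
    obtain ⟨k, hk⟩ := hgen g
    have h1 : c ^ k ∈ Kc := Subgroup.zpow_mem Kc hcK k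
    have h2 : (c ^ k)⁻¹ * g ∈ Kc := ⟨1, by rw [hSfix _ hk, Units.val_one, one_smul]⟩
    have h3 := Kc.mul_mem h1 h2
    rw [mul_inv_cancel_left] at h3
    exact h3
  -- define the character l
  set l : G →* Fˣ := MonoidHom.mk' (fun g => (hKtop g).choose) (by
    intro a b
    refine huniq _ _ ?_
    rw [← (hKtop (a * b)).choose_spec, ← conjMap_conjMap]
    have hb := (hKtop b).choose_spec
    have ha := (hKtop a).choose_spec
    generalize (hKtop b).choose = wb at hb ⊢
    generalize (hKtop a).choose = wa at ha ⊢
    rw [hb, map_smul, ha, smul_smul]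
    norm_cast
    rw [mul_comm]) with hl
  have hlspec : ∀ g : G, conjMap ρ₁ ρ₂ g ψ = ((l g : Fˣ) : F) • ψ :=
    fun g => (hKtop g).choose_spec
  have hlS : ∀ t : G, t ∈ S → l t = 1 := by
    intro t ht
    refine huniq _ _ ?_
    rw [← hlspec t, hSfix t ht, Units.val_one, one_smul]
  -- the key intertwining relation
  have hkey : ∀ (g : G) (v : V₁), ρ₂ g (ψ v) = ((l g : Fˣ) : F) • ψ (ρ₁ g v) := by
    intro g v
    have h1 := LinearMap.congr_fun (hlspec g) (ρ₁ g v)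
    rw [conjMap_apply, rho_inv_apply] at h1
    rw [h1, LinearMap.smul_apply]
  -- A is contained in the kernel of l
  have hAker : A ≤ l.ker := by
    intro a ha
    rw [MonoidHom.mem_ker]
    haveI : (S.subgroupOf A).Normal := Subgroup.normal_subgroupOf
    have hpow : a ^ (S.relIndex A) ∈ S := by
      have h1 : (⟨a, ha⟩ : A) ^ (S.subgroupOf A).index ∈ S.subgroupOf A :=
        Subgroup.pow_index_mem (S.subgroupOf A) _
      rw [Subgroup.mem_subgroupOf] at h1
      exact h1
    have h1 : (l a) ^ (S.relIndex A) = 1 := by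
      rw [← map_pow]
      exact hlS _ hpow
    rcases CharP.char_is_prime_or_zero F (ringChar F) with hp | hp0
    · haveI : Fact (Nat.Prime (ringChar F)) := ⟨hp⟩
      have hx : ((l a : F)) ^ (ringChar F ^ ((Nat.factorization S.index) (ringChar F))) = 1 := by
        rw [← hA]
        have h2 := congrArg Units.val h1
        rwa [Units.val_pow_eq_pow_val, Units.val_one] at h2
      have h2 : ((l a : F) - 1) ^ (ringChar F ^ ((Nat.factorization S.index) (ringChar F))) = 0 := by
        haveI : CharP F (ringChar F) := ringChar.charP F
        rw [sub_pow_char_pow, hx, one_pow, sub_self]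
      have h3 : (l a : F) - 1 = 0 :=
        pow_eq_zero_iff (pow_ne_zero _ hp.ne_zero) |>.mp h2
      exact Units.ext (by rw [Units.val_one]; exact sub_eq_zero.mp h3)
    · have hrel : S.relIndex A = 1 := by
        rw [hA, hp0, Nat.factorization_eq_zero_of_not_prime S.index (by norm_num), pow_zero]
      rw [hrel, pow_one] at hpow
      exact hlS a hpow
  -- ψ is bijective
  have hkerinv : IsSubrep ρ₁ (LinearMap.ker ψ) := by
    intro g v hv
    rw [LinearMap.mem_ker] at hv ⊢
    have h2 := (hkey g v).symm
    rw [hv, map_zero] at h2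
    rcases smul_eq_zero.mp h2 with h | h
    · exact absurd h (Units.ne_zero (l g))
    · exact h
  have hker : LinearMap.ker ψ = ⊥ := by
    rcases h₁.2 (LinearMap.ker ψ) hkerinv with h | h
    · exact h
    · exact absurd (LinearMap.ker_eq_top.mp h) hψne
  have hrangeinv : IsSubrep ρ₂ (LinearMap.range ψ) := by
    rintro g y hy
    obtain ⟨v, rfl⟩ := LinearMap.mem_range.mp hy
    rw [LinearMap.mem_range]
    exact ⟨((l g : Fˣ) : F) • ρ₁ g v, by rw [map_smul, ← hkey]⟩
  have hrange : LinearMap.range ψ = ⊤ := by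
    rcases h₂.2 (LinearMap.range ψ) hrangeinv with h | h
    · exact absurd (LinearMap.range_eq_bot.mp h) hψne
    · exact h
  have hbij : Function.Bijective ψ :=
    ⟨LinearMap.ker_eq_bot.mp hker, LinearMap.range_eq_top.mp hrange⟩
  refine ⟨l, hAker, LinearEquiv.ofBijective ψ hbij, ?_⟩
  intro g v
  show ψ ((l g : F) • ρ₁ g v) = ρ₂ g (ψ v)
  rw [map_smul, ← hkey]
end
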